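/- arXiv:1206.0803 — 6 statements merged into one kernel-verified Lean document; each statement's English description precedes it below -/
import Mathlib

section
/- The Catalan numbers satisfy C_n = sum over j with 0 ≤ 2j ≤ n-1 of C_j * binomial(n-1, 2j) * 2^(n-1-2j), for all n ≥ 1. -/
open Finset

def catF (m k : ℕ) : ℕ := catalan k * m.choose (2*k) * 2 ^ (m - 2*k)

def catG (m j : ℕ) : ℕ := 2 * (2*j+2).choose (j+1) * m.choose (2*j+1) * 2 ^ (m - 1 - 2*j)

lemma catBinom (j : ℕ) : (j+2) * catalan (j+1) = (2*j+2).choose (j+1) := by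
  have := succ_mul_catalan_eq_centralBinom (j+1)
  rwa [Nat.centralBinom, show 2*(j+1) = 2*j+2 by ring] at this

lemma keyS_gen (j t : ℕ) :
    ((2*j+3+t : ℕ) + 3 : ℤ) * catF (2*j+3+t+1) (j+1) - (4*(2*j+3+t)+6) * catF (2*j+3+t) (j+1)
      = catG (2*j+3+t) j - catG (2*j+3+t) (j+1) := by
  have hA : (2*j+3+t+1).choose (2*(j+1)) = (2*j+3+t).choose (2*j+1) + (2*j+3+t).choose (2*j+2) := by
    rw [show 2*(j+1) = (2*j+1)+1 by ring, show 2*j+3+t+1 = (2*j+3+t)+1 from rfl,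
      Nat.choose_succ_succ]
  have hP : (2*j+3+t).choose (2*j+2) * (2*j+2) = (2*j+3+t).choose (2*j+1) * (t+2) := by
    have := Nat.choose_succ_right_eq (2*j+3+t) (2*j+1)
    rw [show (2*j+1)+1 = 2*j+2 from rfl] at this
    rw [this]; congr 1; omega
  have hQ : (2*j+3+t).choose (2*j+3) * (2*j+3) = (2*j+3+t).choose (2*j+2) * (t+1) := by
    have := Nat.choose_succ_right_eq (2*j+3+t) (2*j+2)
    rw [show (2*j+2)+1 = 2*j+3 from rfl] at this
    rw [this]; congr 1; omega
  have hb' : (j+2) * ((2*j+4).choose (j+2)) = (2*(2*j+3)) * ((2*j+2).choose (j+1)) := by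
    have := Nat.succ_mul_centralBinom_succ (j+1)
    rw [Nat.centralBinom, Nat.centralBinom,
      show (2:ℕ)*(j+1+1) = 2*j+4 by ring, show (2:ℕ)*(j+1) = 2*j+2 by ring,
      show j+1+1 = j+2 from rfl] at this
    rw [show 2*j+2+1 = 2*j+3 by omega] at this
    exact this
  -- integer casts
  rw [show 2*(j+1) = 2*j+2 by ring] at hA
  have hAz : ((2*j+3+t+1).choose (2*j+2) : ℤ)
      = (2*j+3+t).choose (2*j+1) + (2*j+3+t).choose (2*j+2) := by exact_mod_cast hA
  have hPz : ((2*j+3+t).choose (2*j+2) : ℤ) * (2*(j:ℤ)+2)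
      = ((2*j+3+t).choose (2*j+1) : ℤ) * ((t:ℤ)+2) := by exact_mod_cast hP
  have hQz : ((2*j+3+t).choose (2*j+3) : ℤ) * (2*(j:ℤ)+3)
      = ((2*j+3+t).choose (2*j+2) : ℤ) * ((t:ℤ)+1) := by exact_mod_cast hQ
  have hbcz : (((2*j+2).choose (j+1) : ℕ) : ℤ) = ((j:ℤ)+2) * (catalan (j+1) : ℤ) := by
    exact_mod_cast (catBinom j).symm
  have hb'cz : (((2*j+4).choose (j+2) : ℕ) : ℤ) = (4*(j:ℤ)+6) * (catalan (j+1) : ℤ) := by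
    have h2 : ((j:ℤ)+2) * ((2*j+4).choose (j+2) : ℤ)
        = ((j:ℤ)+2) * ((4*(j:ℤ)+6) * (catalan (j+1) : ℤ)) := by
      have := hb'
      have hz : ((j:ℤ)+2) * ((2*j+4).choose (j+2) : ℤ)
          = (2*(2*(j:ℤ)+3)) * ((2*j+2).choose (j+1) : ℤ) := by exact_mod_cast this
      rw [hz, hbcz]; ring
    exact mul_left_cancel₀ (by positivity) h2
  simp only [catF, catG]
  simp only [show 2*(j+1) = 2*j+2 by ring, show 2*(j+1)+2 = 2*j+4 by ring,
    show j+1+1 = j+2 from rfl, show 2*(j+1)+1 = 2*j+3 by ring] 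
  rw [show 2*j+2+2 = 2*j+4 by omega, show 2*j+3+t+1 - (2*j+2) = t+2 by omega,
      show 2*j+3+t - (2*j+2) = t+1 by omega,
      show 2*j+3+t-1-2*j = t+2 by omega,
      show 2*j+3+t-1-(2*j+2) = t by omega]
  push_cast
  linear_combination (4*(2:ℤ)^t*(2*(j:ℤ)+(t:ℤ)+6)*(catalan (j+1):ℤ)) * hAz
    - (8*(2:ℤ)^t*((2*j+3+t).choose (2*j+1) : ℤ)) * hbcz
    - (4*(2:ℤ)^t*(catalan (j+1):ℤ)) * hPz
    + (4*(2:ℤ)^t*(catalan (j+1):ℤ)) * hQz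
    + (2*(2:ℤ)^t*((2*j+3+t).choose (2*j+3) : ℤ)) * hb'cz

lemma keyS (m j : ℕ) :
    ((m:ℤ)+3) * catF (m+1) (j+1) - (4*(m:ℤ)+6) * catF m (j+1)
      = (catG m j : ℤ) - catG m (j+1) := by
  rcases Nat.lt_or_ge m (2*j+1) with h | h
  · have h1 : m+1 < 2*(j+1) := by omega
    have h2 : m < 2*(j+1) := by omega
    have h3 : m < 2*j+1 := by omega
    have h4 : m < 2*(j+1)+1 := by omega
    simp only [catF, catG]
    rw [Nat.choose_eq_zero_of_lt h1, Nat.choose_eq_zero_of_lt h2,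
      Nat.choose_eq_zero_of_lt h3, Nat.choose_eq_zero_of_lt h4]
    simp
  · obtain ⟨t, rfl⟩ := Nat.exists_eq_add_of_le h
    match t with
    | 0 =>
      simp only [Nat.add_zero, catF, catG]
      rw [show 2*j+1+1 = 2*(j+1) by ring, Nat.choose_self,
        Nat.choose_eq_zero_of_lt (show 2*j+1 < 2*(j+1) by omega),
        Nat.choose_eq_zero_of_lt (show 2*j+1 < 2*(j+1)+1 by omega),
        show 2*(j+1) - 2*(j+1) = 0 by omega,
        show 2*j+1-1-2*j = 0 by omega, Nat.choose_self]
      push_cast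
      have hc : ((j:ℤ)+2) * (catalan (j+1) : ℤ) = (((2*(j+1)).choose (j+1) : ℕ) : ℤ) := by
        exact_mod_cast succ_mul_catalan_eq_centralBinom (j+1)
      linear_combination 2 * hc
    | 1 =>
      rw [show 2*j+1+1 = 2*j+2 by omega]
      simp only [catF, catG]
      rw [show 2*(j+1) = 2*j+2 by ring]
      rw [Nat.choose_succ_self_right, Nat.choose_self,
        Nat.choose_eq_zero_of_lt (show 2*j+2 < 2*j+2+1 by omega),
        show 2*j+2+1 - (2*j+2) = 1 by omega,
        show 2*j+2 - (2*j+2) = 0 by omega,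
        show 2*j+2-1-2*j = 1 by omega,
        show (2*j+2).choose (2*j+1) = 2*j+2 from Nat.choose_succ_self_right _]
      push_cast
      have hc : ((j:ℤ)+2) * (catalan (j+1) : ℤ) = (((2*j+2).choose (j+1) : ℕ) : ℤ) := by
        have h' := succ_mul_catalan_eq_centralBinom (j+1)
        rw [Nat.centralBinom, show 2*(j+1) = 2*j+2 by ring] at h'
        exact_mod_cast h'
      linear_combination (8*(j:ℤ)+8) * hc
    | (s+2) =>
      rw [show 2*j+1+(s+2) = 2*j+3+s by omega]
      exact keyS_gen j s

lemma key0 (m : ℕ) :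
    ((m:ℤ)+3) * catF (m+1) 0 - (4*(m:ℤ)+6) * catF m 0 = 0 - (catG m 0 : ℤ) := by
  match m with
  | 0 => simp [catF, catG]
  | (s+1) =>
    simp only [catF, catG]
    norm_num
    ring

/-- The full sum. -/
def catT (m : ℕ) : ℕ := ∑ k ∈ range (m+2), catF m k

lemma catG_top (m : ℕ) : catG m (m+2) = 0 := by
  simp only [catG]
  rw [Nat.choose_eq_zero_of_lt (show m < 2*(m+2)+1 by omega)]
  ring

lemma rec_T (m : ℕ) : (m+3) * catT (m+1) = (4*m+6) * catT m := by
  have hz : ((m:ℤ)+3) * (catT (m+1) : ℤ) - (4*(m:ℤ)+6) * (catT m : ℤ) = 0 := by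
    have hTm : (catT m : ℤ) = ∑ k ∈ range (m+3), (catF m k : ℤ) := by
      rw [Finset.sum_range_succ]
      have : catF m (m+2) = 0 := by
        simp only [catF]
        rw [Nat.choose_eq_zero_of_lt (show m < 2*(m+2) by omega)]
        ring
      rw [this]
      push_cast [catT]
      ring
    have hT1 : (catT (m+1) : ℤ) = ∑ k ∈ range (m+3), (catF (m+1) k : ℤ) := by
      push_cast [catT]
      norm_num
    rw [hTm, hT1, Finset.mul_sum, Finset.mul_sum, ← Finset.sum_sub_distrib]
    have hsplit : ∑ k ∈ range (m+3),
        (((m:ℤ)+3) * (catF (m+1) k : ℤ) - (4*(m:ℤ)+6) * (catF m k : ℤ))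
        = (∑ j ∈ range (m+2),
            (((m:ℤ)+3) * (catF (m+1) (j+1) : ℤ) - (4*(m:ℤ)+6) * (catF m (j+1) : ℤ)))
          + (((m:ℤ)+3) * (catF (m+1) 0 : ℤ) - (4*(m:ℤ)+6) * (catF m 0 : ℤ)) :=
      Finset.sum_range_succ' _ (m+2)
    rw [hsplit, key0 m]
    have htel : ∑ j ∈ range (m+2),
        (((m:ℤ)+3) * (catF (m+1) (j+1) : ℤ) - (4*(m:ℤ)+6) * (catF m (j+1) : ℤ))
        = (catG m 0 : ℤ) - (catG m (m+2) : ℤ) := by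
      rw [← Finset.sum_range_sub' (fun j => (catG m j : ℤ)) (m+2)]
      exact Finset.sum_congr rfl fun j _ => keyS m j
    rw [htel, catG_top]
    push_cast
    ring
  have : ((m:ℤ)+3) * (catT (m+1) : ℤ) = (4*(m:ℤ)+6) * (catT m : ℤ) := by linarith
  exact_mod_cast this

lemma catalan_rec (m : ℕ) : (m+3) * catalan (m+2) = (4*m+6) * catalan (m+1) := by
  have h1 : (m+3) * catalan (m+2) = Nat.centralBinom (m+2) :=
    succ_mul_catalan_eq_centralBinom (m+2)
  have h2 : (m+2) * Nat.centralBinom (m+2) = 2 * (2*(m+1)+1) * Nat.centralBinom (m+1) :=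
    Nat.succ_mul_centralBinom_succ (m+1)
  have h3 : (m+2) * catalan (m+1) = Nat.centralBinom (m+1) :=
    succ_mul_catalan_eq_centralBinom (m+1)
  have h4 : (m+2) * ((m+3) * catalan (m+2)) = (m+2) * ((4*m+6) * catalan (m+1)) := by
    rw [h1, h2, ← h3]; ring
  exact Nat.eq_of_mul_eq_mul_left (by omega) h4

lemma catalan_eq_T (m : ℕ) : catalan (m+1) = catT m := by
  induction m with
  | zero => simp [catT, catF, Finset.sum_range_succ]
  | succ m ih =>
    have h1 : (m+3) * catT (m+1) = (4*m+6) * catT m := rec_T m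
    have h2 : (m+3) * catalan (m+2) = (4*m+6) * catalan (m+1) := catalan_rec m
    rw [ih] at h2
    have h3 := h2.trans h1.symm
    rw [show m+1+1 = m+2 from rfl]
    exact Nat.eq_of_mul_eq_mul_left (show 0 < m+3 by omega) h3

/-- For `n ≥ 1`, the Catalan numbers satisfy
`C_n = ∑_{0 ≤ 2j ≤ n-1} C_j * binomial(n-1, 2j) * 2^(n-1-2j)`. -/
theorem catalan_gamma_sum (n : ℕ) (hn : 1 ≤ n) :
    catalan n = ∑ j ∈ (Finset.range n).filter (fun j => 2 * j ≤ n - 1),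
      catalan j * (n - 1).choose (2 * j) * 2 ^ (n - 1 - 2 * j) := by
  obtain ⟨m, rfl⟩ : ∃ m, n = m + 1 := ⟨n - 1, by omega⟩
  rw [show m + 1 - 1 = m from rfl]
  rw [catalan_eq_T m, catT]
  symm
  apply Finset.sum_subset
  · intro j hj
    rw [Finset.mem_filter, Finset.mem_range] at hj
    rw [Finset.mem_range]
    omega
  · intro j hj hj'
    rw [Finset.mem_filter, Finset.mem_range] at hj'
    rw [Finset.mem_range] at hj
    push_neg at hj'
    have : m < 2*j := by
      by_cases hlt : j < m+1
      · exact Nat.lt_of_not_le fun hle => absurd (hj' hlt) (by omega)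
      · omega
    show catalan j * m.choose (2*j) * 2^(m-2*j) = 0
    rw [Nat.choose_eq_zero_of_lt this]
    ring
end

section
/- The area generating polynomial for Dyck paths, D_n(q) = sum over Dyck paths p of order n of q^(area(p)), satisfies the Carlitz–Riordan recurrence D_n(q) = sum_{k=0}^{n-1} q^k * D_k(q) * D_{n-1-k}(q) for n ≥ 1, with D_0(q) = 1. -/
open Finset

/-- Number of up steps (`true`) among the first `k` steps of `p`. -/
def upCount {m : ℕ} (p : Fin m → Bool) (k : ℕ) : ℕ :=
  (Finset.univ.filter fun i : Fin m => (i : ℕ) < k ∧ p i = true).card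

/-- Number of down steps (`false`) among the first `k` steps of `p`. -/
def downCount {m : ℕ} (p : Fin m → Bool) (k : ℕ) : ℕ :=
  (Finset.univ.filter fun i : Fin m => (i : ℕ) < k ∧ p i = false).card

/-- `p` is a Dyck path of order `n`: a path of `2n` steps (up = `true`,
down = `false`), with `n` up steps, never going below the x-axis. -/
def IsDyck (n : ℕ) (p : Fin (2 * n) → Bool) : Prop :=
  upCount p (2 * n) = n ∧ ∀ k < 2 * n + 1, downCount p k ≤ upCount p k

instance (n : ℕ) : DecidablePred (IsDyck n) := fun p => by
  unfold IsDyck; infer_instance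

/-- The Finset of Dyck paths of order `n`. -/
def dyckSet (n : ℕ) : Finset (Fin (2 * n) → Bool) :=
  Finset.univ.filter (IsDyck n)

/-- Height of the path after `k` steps. -/
def height {n : ℕ} (p : Fin (2 * n) → Bool) (k : ℕ) : ℕ :=
  upCount p k - downCount p k

/-- The area of a Dyck path: the number of unused lattice points strictly below
the path and weakly above the x-axis (equivalently, the number of
`1/√2 × 1/√2` diamonds fitting between the path and the x-axis). -/
def area {n : ℕ} (p : Fin (2 * n) → Bool) : ℕ :=
  ∑ k ∈ Finset.range (2 * n + 1), height p k / 2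

/-- The `j`-th step of `p` (defaulting to `false` out of range). -/
def stepAt {m : ℕ} (p : Fin m → Bool) (j : ℕ) : Bool :=
  if h : j < m then p ⟨j, h⟩ else false

/-- The rank of a Dyck path of order `n` in the noncrossing partition lattice
under Stump's bijection: equivalently (Simion–Ullman) the number of letters `b`
and `r` in its SU-word, i.e. the number of `i ∈ {1,…,n-1}` for which the step
leaving the `i`-th odd lattice point (the step with index `2i-1`, 0-indexed)
is an up step. -/
def rk {n : ℕ} (p : Fin (2 * n) → Bool) : ℕ :=
  ((Finset.Icc 1 (n - 1)).filter fun i => stepAt p (2 * i - 1) = true).card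

namespace CR

def u (f : ℕ → Bool) (k : ℕ) : ℕ := ∑ j ∈ Finset.range k, (if f j = true then 1 else 0)
def d (f : ℕ → Bool) (k : ℕ) : ℕ := ∑ j ∈ Finset.range k, (if f j = false then 1 else 0)

lemma u_zero (f) : u f 0 = 0 := rfl
lemma d_zero (f) : d f 0 = 0 := rfl

lemma u_succ (f k) : u f (k+1) = u f k + (if f k = true then 1 else 0) :=
  Finset.sum_range_succ _ _
lemma d_succ (f k) : d f (k+1) = d f k + (if f k = false then 1 else 0) :=
  Finset.sum_range_succ _ _

lemma u_add_d (f k) : u f k + d f k = k := by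
  induction k with
  | zero => simp [u, d]
  | succ k ih => rw [u_succ, d_succ]; cases hfk : f k <;> simp [hfk] <;> omega

lemma u_congr {f g k} (h : ∀ j < k, f j = g j) : u f k = u g k :=
  Finset.sum_congr rfl fun j hj => by rw [h j (Finset.mem_range.mp hj)]
lemma d_congr {f g k} (h : ∀ j < k, f j = g j) : d f k = d g k :=
  Finset.sum_congr rfl fun j hj => by rw [h j (Finset.mem_range.mp hj)]

lemma u_mono (f) {k l} (h : k ≤ l) : u f k ≤ u f l :=
  Finset.sum_le_sum_of_subset (Finset.range_subset_range.mpr h)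
lemma d_mono (f) {k l} (h : k ≤ l) : d f k ≤ d f l :=
  Finset.sum_le_sum_of_subset (Finset.range_subset_range.mpr h)

lemma u_shift (f : ℕ → Bool) (m : ℕ) : ∀ s, u f (m + s) = u f m + u (fun j => f (m + j)) s := by
  intro s
  induction s with
  | zero => simp [u]
  | succ s ih => rw [← Nat.add_assoc, u_succ, ih, u_succ]; omega

lemma d_shift (f : ℕ → Bool) (m : ℕ) : ∀ s, d f (m + s) = d f m + d (fun j => f (m + j)) s := by
  intro s
  induction s with
  | zero => simp [d]
  | succ s ih => rw [← Nat.add_assoc, d_succ, ih, d_succ]; omega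

lemma stepAt_lt {m : ℕ} (p : Fin m → Bool) {j : ℕ} (hj : j < m) :
    stepAt p j = p ⟨j, hj⟩ := dif_pos hj

lemma stepAt_coe {m : ℕ} (p : Fin m → Bool) (i : Fin m) : stepAt p (i : ℕ) = p i := by
  simp [stepAt, i.isLt]

lemma upCount_eq {m : ℕ} (p : Fin m → Bool) {k : ℕ} (hk : k ≤ m) :
    upCount p k = u (stepAt p) k := by
  unfold upCount u
  rw [Finset.card_filter]
  have h1 : ∀ i : Fin m, (if ((i : ℕ) < k ∧ p i = true) then 1 else 0)
      = (fun j : ℕ => if (j < k ∧ stepAt p j = true) then 1 else 0) (i : ℕ) := by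
    intro i; simp [stepAt_coe]
  rw [Finset.sum_congr rfl fun i _ => h1 i,
    Fin.sum_univ_eq_sum_range (fun j : ℕ => if (j < k ∧ stepAt p j = true) then 1 else 0) m]
  rw [← Finset.sum_subset (Finset.range_subset_range.mpr hk) (by
    intro j _ hj
    rw [Finset.mem_range] at hj
    simp [hj])]
  refine Finset.sum_congr rfl fun j hj => ?_
  rw [Finset.mem_range] at hj
  simp [hj]

lemma downCount_eq {m : ℕ} (p : Fin m → Bool) {k : ℕ} (hk : k ≤ m) :
    downCount p k = d (stepAt p) k := by
  unfold downCount d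
  rw [Finset.card_filter]
  have h1 : ∀ i : Fin m, (if ((i : ℕ) < k ∧ p i = false) then 1 else 0)
      = (fun j : ℕ => if (j < k ∧ stepAt p j = false) then 1 else 0) (i : ℕ) := by
    intro i; simp [stepAt_coe]
  rw [Finset.sum_congr rfl fun i _ => h1 i,
    Fin.sum_univ_eq_sum_range (fun j : ℕ => if (j < k ∧ stepAt p j = false) then 1 else 0) m]
  rw [← Finset.sum_subset (Finset.range_subset_range.mpr hk) (by
    intro j _ hj
    rw [Finset.mem_range] at hj
    simp [hj])]
  refine Finset.sum_congr rfl fun j hj => ?_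
  rw [Finset.mem_range] at hj
  simp [hj]

lemma isDyck_iff {n : ℕ} {p : Fin (2*n) → Bool} :
    IsDyck n p ↔ (u (stepAt p) (2*n) = n ∧ ∀ k ≤ 2*n, d (stepAt p) k ≤ u (stepAt p) k) := by
  unfold IsDyck
  rw [upCount_eq p le_rfl]
  constructor
  · rintro ⟨h1, h2⟩
    refine ⟨h1, fun k hk => ?_⟩
    have := h2 k (by omega)
    rwa [upCount_eq p hk, downCount_eq p hk] at this
  · rintro ⟨h1, h2⟩
    refine ⟨h1, fun k hk => ?_⟩
    have hk' : k ≤ 2*n := by omega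
    rw [upCount_eq p hk', downCount_eq p hk']
    exact h2 k hk'

lemma area_eq {n : ℕ} (p : Fin (2*n) → Bool) :
    area p = ∑ j ∈ Finset.range (2*n+1), (u (stepAt p) j - d (stepAt p) j) / 2 := by
  unfold area height
  refine Finset.sum_congr rfl fun j hj => ?_
  rw [Finset.mem_range] at hj
  rw [upCount_eq p (by omega), downCount_eq p (by omega)]

end CR

namespace CR

/-- the glued step function: an up step, then `f1` for `a` steps, a down step, then `f2`. -/
def G (a : ℕ) (f1 f2 : ℕ → Bool) : ℕ → Bool := fun j =>
  if j = 0 then true else if j ≤ a then f1 (j-1) else if j = a+1 then false else f2 (j - (a+2))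

lemma G_zero (a f1 f2) : G a f1 f2 0 = true := rfl

lemma G_mid (a f1 f2) {t : ℕ} (ht : t < a) : G a f1 f2 (t+1) = f1 t := by
  unfold G
  rw [if_neg (by omega), if_pos (by omega)]
  congr 1

lemma G_top (a f1 f2) : G a f1 f2 (a+1) = false := by
  unfold G
  rw [if_neg (by omega), if_neg (by omega), if_pos rfl]

lemma G_right (a f1 f2) (s : ℕ) : G a f1 f2 (a+2+s) = f2 s := by
  unfold G
  rw [if_neg (by omega), if_neg (by omega), if_neg (by omega)]
  congr 1
  omega

lemma uG_mid (a f1 f2) : ∀ t ≤ a, u (G a f1 f2) (t+1) = u f1 t + 1 := by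
  intro t
  induction t with
  | zero => intro _; rw [u_succ, G_zero]; simp [u_zero]
  | succ t ih =>
    intro ht
    rw [u_succ, ih (by omega), G_mid a f1 f2 (by omega : t < a), u_succ]
    omega

lemma dG_mid (a f1 f2) : ∀ t ≤ a, d (G a f1 f2) (t+1) = d f1 t := by
  intro t
  induction t with
  | zero => intro _; rw [d_succ, G_zero]; simp [d_zero]
  | succ t ih =>
    intro ht
    rw [d_succ, ih (by omega), G_mid a f1 f2 (by omega : t < a), d_succ]
    all_goals omega

lemma uG_right (a f1 f2) (s : ℕ) : u (G a f1 f2) (a+2+s) = u f1 a + 1 + u f2 s := by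
  induction s with
  | zero =>
    show u (G a f1 f2) ((a+1)+1) = _
    rw [u_succ, uG_mid a f1 f2 a le_rfl, G_top]
    all_goals simp [u_zero]
  | succ s ih =>
    have : a+2+(s+1) = (a+2+s)+1 := by omega
    rw [this, u_succ, ih, G_right, u_succ]
    omega

lemma dG_right (a f1 f2) (s : ℕ) : d (G a f1 f2) (a+2+s) = d f1 a + 1 + d f2 s := by
  induction s with
  | zero =>
    show d (G a f1 f2) ((a+1)+1) = _
    rw [d_succ, dG_mid a f1 f2 a le_rfl, G_top]
    all_goals simp [d_zero]
  | succ s ih =>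
    have : a+2+(s+1) = (a+2+s)+1 := by omega
    rw [this, d_succ, ih, G_right, d_succ]
    omega

lemma sum_mod_two (k : ℕ) : ∑ t ∈ Finset.range (2*k+1), t % 2 = k := by
  induction k with
  | zero => simp
  | succ k ih =>
    have h : 2*(k+1)+1 = (2*k+1)+1+1 := by omega
    rw [h, Finset.sum_range_succ, Finset.sum_range_succ, ih]
    omega

lemma area_G (k b : ℕ) (f1 f2 : ℕ → Bool) (h1u : u f1 (2*k) = k)
    (h1d : ∀ t ≤ 2*k, d f1 t ≤ u f1 t) :
    ∑ j ∈ Finset.range (2*k+2+b+1), (u (G (2*k) f1 f2) j - d (G (2*k) f1 f2) j) / 2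
      = k + (∑ t ∈ Finset.range (2*k+1), (u f1 t - d f1 t) / 2)
          + (∑ s ∈ Finset.range (b+1), (u f2 s - d f2 s) / 2) := by
  have hsplit : 2*k+2+b+1 = (2*k+2) + (b+1) := by omega
  rw [hsplit, Finset.sum_range_add]
  have hsplit2 : 2*k+2 = 1 + (2*k+1) := by omega
  rw [hsplit2, Finset.sum_range_add]
  have e0 : ∑ j ∈ Finset.range 1,
      (u (G (2*k) f1 f2) j - d (G (2*k) f1 f2) j) / 2 = 0 := by
    simp [u_zero, d_zero]
  have e1 : ∑ t ∈ Finset.range (2*k+1),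
      (u (G (2*k) f1 f2) (1+t) - d (G (2*k) f1 f2) (1+t)) / 2
      = (∑ t ∈ Finset.range (2*k+1), (u f1 t - d f1 t) / 2) + k := by
    have step : ∀ t ∈ Finset.range (2*k+1),
        (u (G (2*k) f1 f2) (1+t) - d (G (2*k) f1 f2) (1+t)) / 2
        = (u f1 t - d f1 t) / 2 + t % 2 := by
      intro t ht
      rw [Finset.mem_range] at ht
      have ht' : t ≤ 2*k := by omega
      have h1 : (1:ℕ) + t = t + 1 := by omega
      rw [h1, uG_mid (2*k) f1 f2 t ht', dG_mid (2*k) f1 f2 t ht']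
      have := h1d t ht'
      have := u_add_d f1 t
      omega
    rw [Finset.sum_congr rfl step, Finset.sum_add_distrib, sum_mod_two]
  have e2 : ∑ s ∈ Finset.range (b+1),
      (u (G (2*k) f1 f2) (1+(2*k+1)+s) - d (G (2*k) f1 f2) (1+(2*k+1)+s)) / 2
      = ∑ s ∈ Finset.range (b+1), (u f2 s - d f2 s) / 2 := by
    refine Finset.sum_congr rfl fun s _ => ?_
    have h2 : (1:ℕ)+(2*k+1)+s = 2*k+2+s := by omega
    rw [h2, uG_right, dG_right]
    have hd1 : d f1 (2*k) = k := by
      have := u_add_d f1 (2*k); omega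
    rw [h1u, hd1]
    omega
  rw [e0, e1, e2]
  omega

end CR

namespace CR

def glue (n k : ℕ) (p1 : Fin (2*k) → Bool) (p2 : Fin (2*(n-1-k)) → Bool) :
    Fin (2*n) → Bool :=
  fun i => G (2*k) (stepAt p1) (stepAt p2) (i : ℕ)

lemma stepAt_glue {n k : ℕ} (hk : k < n) (p1 : Fin (2*k) → Bool)
    (p2 : Fin (2*(n-1-k)) → Bool) :
    stepAt (glue n k p1 p2) = G (2*k) (stepAt p1) (stepAt p2) := by
  funext j
  by_cases hj : j < 2*n
  · rw [stepAt, dif_pos hj]; rfl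
  · rw [stepAt, dif_neg hj]
    unfold G
    rw [if_neg (by omega), if_neg (by omega), if_neg (by omega)]
    rw [stepAt, dif_neg (by omega)]

lemma glue_isDyck {n k : ℕ} (hk : k < n) {p1 : Fin (2*k) → Bool}
    {p2 : Fin (2*(n-1-k)) → Bool} (h1 : IsDyck k p1) (h2 : IsDyck (n-1-k) p2) :
    IsDyck n (glue n k p1 p2) := by
  rw [isDyck_iff] at h1 h2 ⊢
  rw [stepAt_glue hk]
  set f1 := stepAt p1
  set f2 := stepAt p2
  have hb : 2*n = 2*k+2+(2*(n-1-k)) := by omega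
  constructor
  · rw [hb, uG_right, h1.1, h2.1]; omega
  · intro j hj
    rcases Nat.eq_zero_or_pos j with h0 | h0
    · subst h0; simp [u_zero, d_zero]
    obtain ⟨t, rfl⟩ := Nat.exists_eq_add_of_le h0
    simp only [Nat.add_comm 1 t] at *
    by_cases hta : t ≤ 2*k
    · rw [uG_mid _ _ _ t hta, dG_mid _ _ _ t hta]
      have := h1.2 t hta
      omega
    · have hs : t + 1 = 2*k+2+(t-(2*k+1)) := by omega
      rw [hs, uG_right, dG_right]
      have hd1 : d f1 (2*k) = k := by have := u_add_d f1 (2*k); have := h1.1; omega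
      have := h2.2 (t-(2*k+1)) (by omega)
      rw [h1.1, hd1]
      omega

lemma area_glue {n k : ℕ} (hk : k < n) {p1 : Fin (2*k) → Bool}
    {p2 : Fin (2*(n-1-k)) → Bool} (h1 : IsDyck k p1) :
    area (glue n k p1 p2) = k + area p1 + area p2 := by
  rw [isDyck_iff] at h1
  rw [area_eq, area_eq, area_eq, stepAt_glue hk]
  have hb : 2*n+1 = 2*k+2+(2*(n-1-k))+1 := by omega
  rw [hb]
  exact area_G k (2*(n-1-k)) (stepAt p1) (stepAt p2) h1.1 h1.2

end CR

namespace CR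

def fret {n : ℕ} (p : Fin (2*n) → Bool) : ℕ :=
  Nat.find (⟨2*n, Or.inr rfl⟩ :
    ∃ j, (0 < j ∧ upCount p j = downCount p j) ∨ j = 2*n)

def kOf {n : ℕ} (p : Fin (2*n) → Bool) : ℕ := upCount p (fret p) - 1

def pleft (n k : ℕ) (p : Fin (2*n) → Bool) : Fin (2*k) → Bool :=
  fun i => stepAt p ((i : ℕ) + 1)

def pright (n k : ℕ) (p : Fin (2*n) → Bool) : Fin (2*(n-1-k)) → Bool :=
  fun i => stepAt p ((i : ℕ) + (2*k+2))

lemma fret_le {n : ℕ} (p : Fin (2*n) → Bool) : fret p ≤ 2*n :=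
  Nat.find_le (Or.inr rfl)

lemma fret_min {n : ℕ} (p : Fin (2*n) → Bool) {j : ℕ} (hj : j < fret p) :
    ¬ ((0 < j ∧ upCount p j = downCount p j) ∨ j = 2*n) :=
  Nat.find_min _ hj

section main
variable {n : ℕ} (hn : 1 ≤ n) {p : Fin (2*n) → Bool} (hp : IsDyck n p)

include hn hp

lemma fret_spec : 0 < fret p ∧ u (stepAt p) (fret p) = d (stepAt p) (fret p) := by
  have hf := Nat.find_spec (⟨2*n, Or.inr rfl⟩ :
    ∃ j, (0 < j ∧ upCount p j = downCount p j) ∨ j = 2*n)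
  rw [isDyck_iff] at hp
  rcases hf with ⟨h0, he⟩ | he
  · refine ⟨h0, ?_⟩
    have hle : fret p ≤ 2*n := fret_le p
    have he' : upCount p (fret p) = downCount p (fret p) := he
    rw [upCount_eq p hle, downCount_eq p hle] at he'
    exact he'
  · have he' : fret p = 2*n := he
    refine ⟨by rw [he']; omega, ?_⟩
    rw [he']
    have := u_add_d (stepAt p) (2*n)
    rw [hp.1]
    omega

lemma fret_eq : fret p = 2 * kOf p + 2 := by
  rw [isDyck_iff] at hp
  obtain ⟨h0, he⟩ := fret_spec hn (isDyck_iff.mpr hp)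
  have hle := fret_le p
  have hsum := u_add_d (stepAt p) (fret p)
  have hu0 : 0 < u (stepAt p) (fret p) := by omega
  unfold kOf
  rw [upCount_eq p hle]
  omega

lemma kOf_lt : kOf p < n := by
  have h1 := fret_eq hn hp
  have h2 := fret_le p
  omega

lemma u_fret : u (stepAt p) (2 * kOf p + 2) = kOf p + 1 := by
  obtain ⟨h0, he⟩ := fret_spec hn hp
  have h1 := fret_eq hn hp
  have hsum := u_add_d (stepAt p) (fret p)
  rw [← h1]
  omega

/-- strictly positive strictly before the first return -/
lemma pos_before {j : ℕ} (hj0 : 0 < j) (hj : j < 2 * kOf p + 2) :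
    d (stepAt p) j + 1 ≤ u (stepAt p) j := by
  have h1 := fret_eq hn hp
  have hmin := fret_min p (j := j) (by omega)
  push_neg at hmin
  have hne := hmin.1 hj0
  have hle : j ≤ 2*n := by have := fret_le p; omega
  rw [upCount_eq p hle, downCount_eq p hle] at hne
  rw [isDyck_iff] at hp
  have := hp.2 j hle
  omega

lemma step_zero : stepAt p 0 = true := by
  have hd := pos_before hn hp (j := 1) (by omega) (by omega)
  have h1 := u_add_d (stepAt p) 1
  have h2 := u_succ (stepAt p) 0
  rw [u_zero] at h2
  by_contra hb
  simp [hb] at h2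
  omega

lemma step_down : stepAt p (2 * kOf p + 1) = false := by
  have hu := u_fret hn hp
  have h2 := u_succ (stepAt p) (2 * kOf p + 1)
  rw [show 2 * kOf p + 1 + 1 = 2 * kOf p + 2 by omega] at h2
  have h3 := pos_before hn hp (j := 2 * kOf p + 1) (by omega) (by omega)
  have h4 := u_add_d (stepAt p) (2 * kOf p + 1)
  by_contra hb
  simp only [Bool.not_eq_false] at hb
  rw [hb] at h2
  simp at h2
  omega

lemma u_mid_succ {t : ℕ} (ht : t ≤ 2 * kOf p) :
    u (stepAt p) (t + 1) = u (stepAt (pleft n (kOf p) p)) t + 1 := by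
  have h0 := step_zero hn hp
  have hshift := u_shift (stepAt p) 1 t
  have hcong : u (fun j => stepAt p (1 + j)) t = u (stepAt (pleft n (kOf p) p)) t := by
    refine u_congr fun j hj => ?_
    rw [stepAt_lt (pleft n (kOf p) p) (show j < 2 * kOf p by omega)]
    show stepAt p (1 + j) = stepAt p (j + 1)
    congr 1; omega
  have h1 : u (stepAt p) 1 = 1 := by
    rw [u_succ, u_zero, h0]; simp
  rw [show t + 1 = 1 + t by omega, hshift, hcong, h1]
  omega

lemma d_mid_succ {t : ℕ} (ht : t ≤ 2 * kOf p) :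
    d (stepAt p) (t + 1) = d (stepAt (pleft n (kOf p) p)) t := by
  have h0 := step_zero hn hp
  have hshift := d_shift (stepAt p) 1 t
  have hcong : d (fun j => stepAt p (1 + j)) t = d (stepAt (pleft n (kOf p) p)) t := by
    refine d_congr fun j hj => ?_
    rw [stepAt_lt (pleft n (kOf p) p) (show j < 2 * kOf p by omega)]
    show stepAt p (1 + j) = stepAt p (j + 1)
    congr 1; omega
  have h1 : d (stepAt p) 1 = 0 := by
    rw [d_succ, d_zero, h0]; simp
  rw [show t + 1 = 1 + t by omega, hshift, hcong, h1]
  omega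

lemma left_isDyck : IsDyck (kOf p) (pleft n (kOf p) p) := by
  rw [isDyck_iff]
  constructor
  · have h1 := u_mid_succ hn hp (t := 2 * kOf p) le_rfl
    have h2 := u_fret hn hp
    have h3 := step_down hn hp
    have h4 := u_succ (stepAt p) (2 * kOf p + 1)
    rw [show 2 * kOf p + 1 + 1 = 2 * kOf p + 2 by omega] at h4
    rw [h3] at h4
    simp at h4
    omega
  · intro t ht
    have h1 := u_mid_succ hn hp (t := t) ht
    have h2 := d_mid_succ hn hp (t := t) ht
    have h3 := pos_before hn hp (j := t + 1) (by omega) (by omega)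
    omega

lemma u_right_shift {s : ℕ} (hs : s ≤ 2*(n-1-kOf p)) :
    u (stepAt p) (2*(kOf p)+2+s) = kOf p + 1 + u (stepAt (pright n (kOf p) p)) s := by
  have hshift := u_shift (stepAt p) (2 * kOf p + 2) s
  have hcong : u (fun j => stepAt p (2 * kOf p + 2 + j)) s
      = u (stepAt (pright n (kOf p) p)) s := by
    refine u_congr fun j hj => ?_
    rw [stepAt_lt (pright n (kOf p) p) (show j < 2*(n-1-kOf p) by omega)]
    show stepAt p (2 * kOf p + 2 + j) = stepAt p (j + (2 * kOf p + 2))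
    congr 1; omega
  rw [hshift, hcong, u_fret hn hp]

lemma d_right_shift {s : ℕ} (hs : s ≤ 2*(n-1-kOf p)) :
    d (stepAt p) (2*(kOf p)+2+s) = kOf p + 1 + d (stepAt (pright n (kOf p) p)) s := by
  have hshift := d_shift (stepAt p) (2 * kOf p + 2) s
  have hcong : d (fun j => stepAt p (2 * kOf p + 2 + j)) s
      = d (stepAt (pright n (kOf p) p)) s := by
    refine d_congr fun j hj => ?_
    rw [stepAt_lt (pright n (kOf p) p) (show j < 2*(n-1-kOf p) by omega)]
    show stepAt p (2 * kOf p + 2 + j) = stepAt p (j + (2 * kOf p + 2))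
    congr 1; omega
  have hd : d (stepAt p) (2 * kOf p + 2) = kOf p + 1 := by
    have := u_add_d (stepAt p) (2 * kOf p + 2)
    have := u_fret hn hp
    omega
  rw [hshift, hcong, hd]

lemma right_isDyck : IsDyck (n - 1 - kOf p) (pright n (kOf p) p) := by
  have hk := kOf_lt hn hp
  rw [isDyck_iff]
  constructor
  · have h1 := u_right_shift hn hp (s := 2*(n-1-kOf p)) le_rfl
    rw [show 2 * kOf p + 2 + 2*(n-1-kOf p) = 2*n by omega] at h1
    rw [isDyck_iff] at hp
    rw [hp.1] at h1
    omega
  · intro s hs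
    have h1 := u_right_shift hn hp (s := s) hs
    have h2 := d_right_shift hn hp (s := s) hs
    have hle : 2 * kOf p + 2 + s ≤ 2*n := by omega
    have h3 := (isDyck_iff.mp hp).2 _ hle
    omega

lemma glue_split : glue n (kOf p) (pleft n (kOf p) p) (pright n (kOf p) p) = p := by
  have hk := kOf_lt hn hp
  funext i
  obtain ⟨j, hjn⟩ := i
  show G (2 * kOf p) (stepAt (pleft n (kOf p) p)) (stepAt (pright n (kOf p) p)) j
      = p ⟨j, hjn⟩
  rw [← stepAt_lt p hjn]
  rcases Nat.eq_zero_or_pos j with h0 | h0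
  · rw [h0, G_zero, step_zero hn hp]
  by_cases hmid : j ≤ 2 * kOf p
  · obtain ⟨t, rfl⟩ : ∃ t, j = t + 1 := ⟨j - 1, by omega⟩
    rw [G_mid _ _ _ (show t < 2 * kOf p by omega)]
    rw [stepAt_lt (pleft n (kOf p) p) (show t < 2 * kOf p by omega)]
    rfl
  by_cases htop : j = 2 * kOf p + 1
  · rw [htop, G_top, step_down hn hp]
  · obtain ⟨s, rfl⟩ : ∃ s, j = 2 * kOf p + 2 + s := ⟨j - (2 * kOf p + 2), by omega⟩
    rw [G_right]
    rw [stepAt_lt (pright n (kOf p) p) (show s < 2*(n-1-kOf p) by omega)]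
    show stepAt p (s + (2 * kOf p + 2)) = _
    congr 1
    omega

end main

end CR

namespace CR

section rev
variable {n k : ℕ} (hk : k < n) {p1 : Fin (2*k) → Bool}
  {p2 : Fin (2*(n-1-k)) → Bool} (h1 : IsDyck k p1) (h2 : IsDyck (n-1-k) p2)

include hk h1 h2

lemma fret_glue : fret (glue n k p1 p2) = 2*k + 2 := by
  rw [isDyck_iff] at h1
  have hG := stepAt_glue hk p1 p2
  have hle : 2*k+2 ≤ 2*n := by omega
  have hu : upCount (glue n k p1 p2) (2*k+2) = k + 1 := by
    rw [upCount_eq _ hle, hG, show 2*k+2 = 2*k+2+0 by omega, uG_right, h1.1]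
    simp [u_zero]
  have hd : downCount (glue n k p1 p2) (2*k+2) = k + 1 := by
    have hdf : d (stepAt p1) (2*k) = k := by
      have := u_add_d (stepAt p1) (2*k); have := h1.1; omega
    rw [downCount_eq _ hle, hG, show 2*k+2 = 2*k+2+0 by omega, dG_right, hdf]
    simp [d_zero]
  unfold fret
  rw [Nat.find_eq_iff]
  constructor
  · exact Or.inl ⟨by omega, by rw [hu, hd]⟩
  · intro j hj
    rintro (⟨hj0, hje⟩ | hj2n)
    · obtain ⟨t, rfl⟩ : ∃ t, j = t + 1 := ⟨j - 1, by omega⟩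
      have ht : t ≤ 2*k := by omega
      have hle' : t + 1 ≤ 2*n := by omega
      rw [upCount_eq _ hle', downCount_eq _ hle', hG,
        uG_mid _ _ _ t ht, dG_mid _ _ _ t ht] at hje
      have := h1.2 t ht
      omega
    · omega

lemma kOf_glue : kOf (glue n k p1 p2) = k := by
  have hf := fret_glue hk h1 h2
  rw [isDyck_iff] at h1
  have hG := stepAt_glue hk p1 p2
  have hle : 2*k+2 ≤ 2*n := by omega
  unfold kOf
  rw [hf, upCount_eq _ hle, hG, show 2*k+2 = 2*k+2+0 by omega, uG_right, h1.1]
  simp [u_zero]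

lemma pleft_glue : pleft n k (glue n k p1 p2) = p1 := by
  funext i
  obtain ⟨t, ht⟩ := i
  show stepAt (glue n k p1 p2) (t + 1) = p1 ⟨t, ht⟩
  rw [stepAt_glue hk p1 p2, G_mid _ _ _ ht, stepAt_lt p1 ht]

lemma pright_glue : pright n k (glue n k p1 p2) = p2 := by
  funext i
  obtain ⟨t, ht⟩ := i
  show stepAt (glue n k p1 p2) (t + (2*k+2)) = p2 ⟨t, ht⟩
  rw [show t + (2*k+2) = 2*k+2+t by omega, stepAt_glue hk p1 p2, G_right,
    stepAt_lt p2 ht]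

end rev

end CR

namespace CR

lemma dyckSet_zero_sum (q : ℝ) : (∑ p ∈ dyckSet 0, q ^ area p) = 1 := by
  have hemp : ∀ (s : Finset (Fin (2*0))), s = ∅ := by
    intro s
    apply Finset.eq_empty_of_forall_notMem
    intro i _
    have := i.isLt
    omega
  have hup : ∀ (p : Fin (2*0) → Bool) (k : ℕ), upCount p k = 0 := by
    intro p k
    unfold upCount
    exact Finset.card_eq_zero.mpr (hemp _)
  have hdown : ∀ (p : Fin (2*0) → Bool) (k : ℕ), downCount p k = 0 := by
    intro p k
    unfold downCount
    exact Finset.card_eq_zero.mpr (hemp _)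
  have hall : dyckSet 0 = Finset.univ := by
    unfold dyckSet
    rw [Finset.filter_true_of_mem]
    intro p _
    exact ⟨hup p _, fun k _ => by rw [hup, hdown]⟩
  have harea : ∀ p : Fin (2*0) → Bool, area p = 0 := by
    intro p
    unfold area height
    refine Finset.sum_eq_zero fun j _ => ?_
    rw [hup, hdown]
    rfl
  rw [hall]
  rw [Finset.sum_congr rfl fun p _ => by rw [harea p, pow_zero]]
  rw [Finset.sum_const, Finset.card_univ]
  have : Fintype.card (Fin (2*0) → Bool) = 1 := by
    rw [Fintype.card_fun]
    norm_num
  rw [this]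
  simp

lemma mem_dyckSet {n : ℕ} {p : Fin (2*n) → Bool} : p ∈ dyckSet n ↔ IsDyck n p := by
  unfold dyckSet
  simp

lemma main_sum {n : ℕ} (hn : 1 ≤ n) (q : ℝ) :
    (∑ p ∈ dyckSet n, q ^ area p) =
      ∑ k ∈ Finset.range n, q ^ k * (∑ p ∈ dyckSet k, q ^ area p) *
        (∑ p ∈ dyckSet (n - 1 - k), q ^ area p) := by
  have hmaps : ∀ p ∈ dyckSet n, kOf p ∈ Finset.range n := fun p hp =>
    Finset.mem_range.mpr (kOf_lt hn (mem_dyckSet.mp hp))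
  rw [← Finset.sum_fiberwise_of_maps_to hmaps (fun p => q ^ area p)]
  refine Finset.sum_congr rfl fun k hk => ?_
  rw [Finset.mem_range] at hk
  rw [mul_assoc, Finset.sum_mul_sum, Finset.mul_sum]
  rw [Finset.sum_congr rfl fun p1 _ => Finset.mul_sum _ _ _]
  rw [← Finset.sum_product' (dyckSet k) (dyckSet (n-1-k))
    (fun p1 p2 => q ^ k * (q ^ area p1 * q ^ area p2))]
  refine Finset.sum_bij' (fun p _ => (pleft n k p, pright n k p))
    (fun pp _ => glue n k pp.1 pp.2) ?_ ?_ ?_ ?_ ?_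
  · intro p hp
    rw [Finset.mem_filter] at hp
    obtain ⟨hpd, hpk⟩ := hp
    have hpd := mem_dyckSet.mp hpd
    rw [Finset.mem_product]
    subst hpk
    exact ⟨mem_dyckSet.mpr (left_isDyck hn hpd), mem_dyckSet.mpr (right_isDyck hn hpd)⟩
  · intro pp hpp
    rw [Finset.mem_product] at hpp
    have h1 := mem_dyckSet.mp hpp.1
    have h2 := mem_dyckSet.mp hpp.2
    rw [Finset.mem_filter]
    exact ⟨mem_dyckSet.mpr (glue_isDyck hk h1 h2), kOf_glue hk h1 h2⟩
  · intro p hp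
    rw [Finset.mem_filter] at hp
    obtain ⟨hpd, hpk⟩ := hp
    have hpd := mem_dyckSet.mp hpd
    subst hpk
    exact glue_split hn hpd
  · intro pp hpp
    rw [Finset.mem_product] at hpp
    have h1 := mem_dyckSet.mp hpp.1
    have h2 := mem_dyckSet.mp hpp.2
    exact Prod.ext (pleft_glue hk h1 h2) (pright_glue hk h1 h2)
  · intro p hp
    rw [Finset.mem_filter] at hp
    obtain ⟨hpd, hpk⟩ := hp
    have hpd := mem_dyckSet.mp hpd
    subst hpk
    have hsplit := glue_split hn hpd
    have harea : area p = kOf p + area (pleft n (kOf p) p) + area (pright n (kOf p) p) := by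
      conv_lhs => rw [← hsplit]
      exact area_glue (kOf_lt hn hpd) (left_isDyck hn hpd)
    rw [harea, pow_add, pow_add]
    ring

end CR


/-- Carlitz–Riordan recurrence for the area generating polynomial of Dyck
paths: `D_0(q) = 1` and, for `n ≥ 1`,
`D_n(q) = ∑_{k=0}^{n-1} q^k D_k(q) D_{n-1-k}(q)`. -/
theorem carlitz_riordan (n : ℕ) (hn : 1 ≤ n) (q : ℝ) :
    (∑ p ∈ dyckSet 0, q ^ area p) = 1 ∧
    (∑ p ∈ dyckSet n, q ^ area p) =
      ∑ k ∈ Finset.range n, q ^ k * (∑ p ∈ dyckSet k, q ^ area p) *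
        (∑ p ∈ dyckSet (n - 1 - k), q ^ area p) :=
  ⟨CR.dyckSet_zero_sum q, CR.main_sum hn q⟩
end

section
/- For each Dyck path p of order n decomposed at its first return as p = p1^+ p2 with p1 of order k, the rank satisfies rk(p1^+) = k - rk(p1), and hence rk(p) = k - rk(p1) + rk(p2). -/
open Finset

lemma stepAt_fin {m : ℕ} (p : Fin m → Bool) (i : Fin m) : stepAt p (i : ℕ) = p i := by
  simp [stepAt, i.isLt]

lemma upCount_eq_sum {m : ℕ} (p : Fin m → Bool) (k : ℕ) (hk : k ≤ m) :
    upCount p k = ∑ i ∈ Finset.range k, (if stepAt p i = true then 1 else 0) := by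
  unfold upCount
  rw [Finset.card_filter]
  have e1 : (∑ i : Fin m, if ((i : ℕ) < k ∧ p i = true) then (1:ℕ) else 0)
      = ∑ i ∈ Finset.range m, (if (i < k ∧ stepAt p i = true) then (1:ℕ) else 0) := by
    rw [← Fin.sum_univ_eq_sum_range (fun j => if (j < k ∧ stepAt p j = true) then (1:ℕ) else 0) m]
    exact Finset.sum_congr rfl fun i _ => by rw [stepAt_fin]
  rw [e1]
  rw [← Finset.sum_subset (Finset.range_subset_range.mpr hk)
    (fun x _ hx => by simp only [Finset.mem_range, not_lt] at hx; simp [Nat.not_lt.mpr hx])]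
  exact Finset.sum_congr rfl fun i hi => by
    simp only [Finset.mem_range] at hi; simp [hi]

lemma downCount_eq_sum {m : ℕ} (p : Fin m → Bool) (k : ℕ) (hk : k ≤ m) :
    downCount p k = ∑ i ∈ Finset.range k, (if stepAt p i = false then 1 else 0) := by
  unfold downCount
  rw [Finset.card_filter]
  have e1 : (∑ i : Fin m, if ((i : ℕ) < k ∧ p i = false) then (1:ℕ) else 0)
      = ∑ i ∈ Finset.range m, (if (i < k ∧ stepAt p i = false) then (1:ℕ) else 0) := by
    rw [← Fin.sum_univ_eq_sum_range (fun j => if (j < k ∧ stepAt p j = false) then (1:ℕ) else 0) m]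
    exact Finset.sum_congr rfl fun i _ => by rw [stepAt_fin]
  rw [e1]
  rw [← Finset.sum_subset (Finset.range_subset_range.mpr hk)
    (fun x _ hx => by simp only [Finset.mem_range, not_lt] at hx; simp [Nat.not_lt.mpr hx])]
  exact Finset.sum_congr rfl fun i hi => by
    simp only [Finset.mem_range] at hi; simp [hi]

lemma rk_eq_sum {n : ℕ} (p : Fin (2 * n) → Bool) :
    rk p = ∑ j ∈ Finset.range (n - 1), (if stepAt p (2 * j + 1) = true then 1 else 0) := by
  unfold rk
  rw [Finset.card_filter]
  rw [show Finset.Icc 1 (n - 1) = Finset.Ico 1 n from by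
    ext x; simp only [Finset.mem_Icc, Finset.mem_Ico]; omega]
  rw [Finset.sum_Ico_eq_sum_range]
  exact Finset.sum_congr rfl fun j _ => by rw [show 2 * (1 + j) - 1 = 2 * j + 1 from by omega]

lemma sum_range_two_mul (f : ℕ → ℕ) (k : ℕ) :
    ∑ i ∈ Finset.range (2 * k), f i = ∑ j ∈ Finset.range k, (f (2 * j) + f (2 * j + 1)) := by
  induction k with
  | zero => simp
  | succ k ih =>
    rw [Finset.sum_range_succ, ← ih, show 2 * (k + 1) = (2 * k + 1) + 1 from by ring,
      Finset.sum_range_succ, Finset.sum_range_succ, add_assoc]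

lemma sum_range_add' (f : ℕ → ℕ) (a b : ℕ) :
    ∑ i ∈ Finset.range (a + b), f i
      = ∑ i ∈ Finset.range a, f i + ∑ j ∈ Finset.range b, f (a + j) := by
  induction b with
  | zero => simp
  | succ b ih =>
    rw [show a + (b + 1) = (a + b) + 1 from by omega, Finset.sum_range_succ, ih,
      Finset.sum_range_succ, add_assoc]

lemma last_step_false {k : ℕ} (hk : 1 ≤ k) (p1 : Fin (2 * k) → Bool) (h : IsDyck k p1) :
    stepAt p1 (2 * k - 1) = false := by
  by_contra hc
  have hc' : stepAt p1 (2 * k - 1) = true := by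
    revert hc; cases stepAt p1 (2 * k - 1) <;> simp
  have hup := h.1
  rw [upCount_eq_sum p1 (2 * k) le_rfl] at hup
  have hs := Finset.sum_range_succ (fun i => if stepAt p1 i = true then (1:ℕ) else 0) (2 * k - 1)
  rw [show 2 * k - 1 + 1 = 2 * k from by omega, hc'] at hs
  simp only [if_true] at hs
  rw [hs] at hup
  have hdle := h.2 (2 * k - 1) (by omega)
  rw [upCount_eq_sum p1 (2 * k - 1) (by omega), downCount_eq_sum p1 (2 * k - 1) (by omega)] at hdle
  have hud : (∑ i ∈ Finset.range (2 * k - 1), (if stepAt p1 i = true then 1 else 0))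
      + (∑ i ∈ Finset.range (2 * k - 1), (if stepAt p1 i = false then 1 else 0)) = 2 * k - 1 := by
    rw [← Finset.sum_add_distrib]
    rw [Finset.sum_congr rfl (fun i _ => show (if stepAt p1 i = true then 1 else 0)
        + (if stepAt p1 i = false then 1 else 0) = 1 from by cases stepAt p1 i <;> simp)]
    simp
  omega

/-- If a Dyck path `p` of order `n` decomposes at its first return as
`p = p1^+ p2` with `p1` of order `k` (here `p1plus = p1^+` is `p1` with an up
step prepended and a down step appended), then `rk(p1^+) = k - rk(p1)` and
hence `rk(p) = k - rk(p1) + rk(p2)`. -/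
theorem rank_first_return (n k : ℕ) (hn : 1 ≤ n) (hk : k ≤ n - 1)
    (p : Fin (2 * n) → Bool) (p1 : Fin (2 * k) → Bool)
    (p1plus : Fin (2 * (k + 1)) → Bool)
    (p2 : Fin (2 * (n - 1 - k)) → Bool)
    (hp : IsDyck n p) (hp1 : IsDyck k p1) (hp1plus : IsDyck (k + 1) p1plus)
    (hp2 : IsDyck (n - 1 - k) p2)
    (h0 : stepAt p 0 = true)
    (h1 : ∀ i < 2 * k, stepAt p (i + 1) = stepAt p1 i)
    (h2 : stepAt p (2 * k + 1) = false)
    (h3 : ∀ i < 2 * (n - 1 - k), stepAt p (2 * k + 2 + i) = stepAt p2 i)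
    (g0 : stepAt p1plus 0 = true)
    (g1 : ∀ i < 2 * k, stepAt p1plus (i + 1) = stepAt p1 i)
    (g2 : stepAt p1plus (2 * k + 1) = false) :
    rk p1plus = k - rk p1 ∧ rk p = k - rk p1 + rk p2 := by
  have hkn : n - 1 = k + (n - 1 - k) := by omega
  have hE : rk p1plus = ∑ j ∈ Finset.range k, (if stepAt p1 (2 * j) = true then 1 else 0) := by
    rw [rk_eq_sum p1plus, show (k + 1) - 1 = k from rfl]
    exact Finset.sum_congr rfl fun j hj => by
      simp only [Finset.mem_range] at hj
      rw [g1 (2 * j) (by omega)]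
  have hO : rk p1 = ∑ j ∈ Finset.range (k - 1), (if stepAt p1 (2 * j + 1) = true then 1 else 0) :=
    rk_eq_sum p1
  have htot : (∑ j ∈ Finset.range k, (if stepAt p1 (2 * j) = true then 1 else 0))
      + (∑ j ∈ Finset.range k, (if stepAt p1 (2 * j + 1) = true then 1 else 0)) = k := by
    rw [← Finset.sum_add_distrib,
      ← sum_range_two_mul (fun i => if stepAt p1 i = true then 1 else 0) k,
      ← upCount_eq_sum p1 (2 * k) le_rfl]
    exact hp1.1
  have hOfull : (∑ j ∈ Finset.range k, (if stepAt p1 (2 * j + 1) = true then 1 else 0))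
      = rk p1 := by
    rcases Nat.eq_zero_or_pos k with hk0 | hk1
    · simp [hO, hk0]
    · have hs := Finset.sum_range_succ
        (fun j => if stepAt p1 (2 * j + 1) = true then (1:ℕ) else 0) (k - 1)
      rw [show k - 1 + 1 = k from by omega] at hs
      rw [hs, show 2 * (k - 1) + 1 = 2 * k - 1 from by omega, last_step_false hk1 p1 hp1]
      simp [hO]
  have first : rk p1plus = k - rk p1 := by omega
  refine ⟨first, ?_⟩
  have hsplit := sum_range_add' (fun j => if stepAt p (2 * j + 1) = true then (1:ℕ) else 0)
    k (n - 1 - k)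
  rw [show k + (n - 1 - k) = n - 1 from by omega] at hsplit
  rw [rk_eq_sum p, hsplit]
  have hpart1 : (∑ j ∈ Finset.range k, (if stepAt p (2 * j + 1) = true then 1 else 0))
      = ∑ j ∈ Finset.range k, (if stepAt p1 (2 * j) = true then 1 else 0) :=
    Finset.sum_congr rfl fun j hj => by
      simp only [Finset.mem_range] at hj
      rw [h1 (2 * j) (by omega)]
  have hpart2 : (∑ j ∈ Finset.range (n - 1 - k),
      (if stepAt p (2 * (k + j) + 1) = true then 1 else 0)) = rk p2 := by
    rcases Nat.eq_zero_or_pos (n - 1 - k) with hm0 | hm1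
    · have e1 : Finset.range (n - 1 - k) = ∅ := by rw [hm0]; rfl
      have e2 : Finset.range (n - 1 - k - 1) = ∅ := by rw [hm0]; rfl
      rw [rk_eq_sum p2, e1, e2]
      simp
    · have hs := Finset.sum_range_succ'
        (fun j => if stepAt p (2 * (k + j) + 1) = true then (1:ℕ) else 0) (n - 1 - k - 1)
      rw [show n - 1 - k - 1 + 1 = n - 1 - k from by omega] at hs
      rw [hs, show 2 * (k + 0) + 1 = 2 * k + 1 from by ring, h2]
      simp only [Bool.false_eq_true, if_false, add_zero]
      rw [rk_eq_sum p2]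
      exact (Finset.sum_congr rfl fun t ht => by
        simp only [Finset.mem_range] at ht
        rw [show 2 * (k + (t + 1)) + 1 = 2 * k + 2 + (2 * t + 1) from by ring,
          h3 (2 * t + 1) (by omega)]).symm
  rw [hpart1, hpart2]
  omega
end

section
/- The bivariate generating polynomial D_n(q,t) = sum over Dyck paths p of order n of q^(area(p)) * t^(rk(p)) satisfies the recurrence D_n(q,t) = sum_{k=0}^{n-1} (qt)^k * D_k(q, 1/t) * D_{n-1-k}(q,t) for n ≥ 1, with D_0(q,t) = 1. -/
open Finset

namespace RCR


def uc (f : ℕ → Bool) (m : ℕ) : ℕ := ((Finset.range m).filter (fun j => f j = true)).card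
def dc (f : ℕ → Bool) (m : ℕ) : ℕ := ((Finset.range m).filter (fun j => f j = false)).card

@[simp] lemma uc_zero (f : ℕ → Bool) : uc f 0 = 0 := by simp [uc]
@[simp] lemma dc_zero (f : ℕ → Bool) : dc f 0 = 0 := by simp [dc]

lemma uc_succ (f : ℕ → Bool) (m : ℕ) :
    uc f (m+1) = uc f m + (if f m = true then 1 else 0) := by
  unfold uc
  rw [Finset.range_add_one, Finset.filter_insert]
  by_cases h : f m = true
  · rw [if_pos h, Finset.card_insert_of_notMem (by simp), if_pos h]
  · rw [if_neg h, if_neg h, add_zero]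

lemma dc_succ (f : ℕ → Bool) (m : ℕ) :
    dc f (m+1) = dc f m + (if f m = false then 1 else 0) := by
  unfold dc
  rw [Finset.range_add_one, Finset.filter_insert]
  by_cases h : f m = false
  · rw [if_pos h, Finset.card_insert_of_notMem (by simp), if_pos h]
  · rw [if_neg h, if_neg h, add_zero]

lemma uc_add_dc (f : ℕ → Bool) (m : ℕ) : uc f m + dc f m = m := by
  induction m with
  | zero => simp
  | succ m ih =>
    rw [uc_succ, dc_succ]
    cases h : f m <;> simp [h] <;> omega

lemma uc_eq_sum (f : ℕ → Bool) (m : ℕ) :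
    uc f m = ∑ j ∈ Finset.range m, (if f j = true then 1 else 0) := by
  unfold uc; rw [Finset.card_filter]

lemma uc_even_odd (f : ℕ → Bool) (k : ℕ) :
    uc f (2*k) = ∑ j ∈ Finset.range k,
      ((if f (2*j) = true then 1 else 0) + (if f (2*j+1) = true then 1 else 0)) := by
  induction k with
  | zero => simp
  | succ k ih =>
    rw [Finset.sum_range_succ, ← ih, show 2*(k+1) = (2*k) + 1 + 1 by ring,
      uc_succ, uc_succ]
    ring

def NDyck (n : ℕ) (f : ℕ → Bool) : Prop :=
  uc f (2*n) = n ∧ ∀ m ≤ 2*n, dc f m ≤ uc f m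

lemma last_step {n : ℕ} {f : ℕ → Bool} (hn : 1 ≤ n) (hf : NDyck n f) :
    f (2*n-1) = false := by
  obtain ⟨h1, h2⟩ := hf
  have e1 : uc f (2*n) = uc f (2*n-1) + (if f (2*n-1) = true then 1 else 0) := by
    have := uc_succ f (2*n-1); rw [show 2*n-1+1 = 2*n by omega] at this; exact this
  have e2 : dc f (2*n) = dc f (2*n-1) + (if f (2*n-1) = false then 1 else 0) := by
    have := dc_succ f (2*n-1); rw [show 2*n-1+1 = 2*n by omega] at this; exact this
  have e3 := uc_add_dc f (2*n)
  have e4 := uc_add_dc f (2*n-1)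
  have e5 := h2 (2*n-1) (by omega)
  cases h : f (2*n-1)
  · rfl
  · exfalso; simp [h] at e1 e2; omega


def glue (k : ℕ) (f g : ℕ → Bool) : ℕ → Bool := fun j =>
  if j = 0 then true
  else if j ≤ 2*k then f (j-1)
  else if j = 2*k+1 then false
  else g (j - (2*k+2))

lemma uc_of_eq (f : ℕ → Bool) {a b : ℕ} (h : a = b + 1) :
    uc f a = uc f b + (if f b = true then 1 else 0) := by subst h; exact uc_succ f b

lemma dc_of_eq (f : ℕ → Bool) {a b : ℕ} (h : a = b + 1) :
    dc f a = dc f b + (if f b = false then 1 else 0) := by subst h; exact dc_succ f b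

lemma uc_glue (k : ℕ) (f g : ℕ → Bool) (m : ℕ) :
    uc (glue k f g) m
      = (if 1 ≤ m then 1 else 0) + uc f (min (m-1) (2*k)) + uc g (m - (2*k+2)) := by
  induction m with
  | zero => simp
  | succ m ih =>
    rw [uc_succ, ih]
    rcases Nat.lt_or_ge m 1 with h0 | h1
    · interval_cases m
      simp [glue]
    rw [if_pos h1, if_pos (by omega : 1 ≤ m + 1)]
    rcases Nat.lt_or_ge m (2*k+1) with h2 | h3
    · have hg : glue k f g m = f (m-1) := by
        unfold glue; rw [if_neg (by omega), if_pos (by omega)]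
      rw [hg, show min (m-1) (2*k) = m - 1 by omega,
        uc_of_eq f (show min (m+1-1) (2*k) = (m-1) + 1 by omega),
        show m + 1 - (2*k+2) = m - (2*k+2) by omega]
      omega
    rcases Nat.eq_or_lt_of_le h3 with h4 | h5
    · have hg : glue k f g m = false := by
        unfold glue; rw [if_neg (by omega), if_neg (by omega), if_pos (by omega)]
      rw [hg, show min (m+1-1) (2*k) = min (m-1) (2*k) by omega,
        show m + 1 - (2*k+2) = m - (2*k+2) by omega]
      simp
    · have hg : glue k f g m = g (m - (2*k+2)) := by
        unfold glue
        rw [if_neg (by omega), if_neg (by omega), if_neg (by omega)]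
      rw [hg, show min (m+1-1) (2*k) = min (m-1) (2*k) by omega,
        uc_of_eq g (show m + 1 - (2*k+2) = (m - (2*k+2)) + 1 by omega)]
      omega

lemma dc_glue (k : ℕ) (f g : ℕ → Bool) (m : ℕ) :
    dc (glue k f g) m
      = dc f (min (m-1) (2*k)) + (if 2*k+2 ≤ m then 1 else 0) + dc g (m - (2*k+2)) := by
  induction m with
  | zero => simp
  | succ m ih =>
    rw [dc_succ, ih]
    rcases Nat.lt_or_ge m 1 with h0 | h1
    · interval_cases m
      simp [glue]
    rcases Nat.lt_or_ge m (2*k+1) with h2 | h3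
    · have hg : glue k f g m = f (m-1) := by
        unfold glue; rw [if_neg (by omega), if_pos (by omega)]
      rw [hg, show min (m-1) (2*k) = m - 1 by omega,
        dc_of_eq f (show min (m+1-1) (2*k) = (m-1) + 1 by omega),
        show m + 1 - (2*k+2) = m - (2*k+2) by omega,
        if_neg (by omega : ¬ 2*k+2 ≤ m), if_neg (by omega : ¬ 2*k+2 ≤ m+1)]
      omega
    rcases Nat.eq_or_lt_of_le h3 with h4 | h5
    · have hg : glue k f g m = false := by
        unfold glue; rw [if_neg (by omega), if_neg (by omega), if_pos (by omega)]
      rw [hg, show min (m+1-1) (2*k) = min (m-1) (2*k) by omega,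
        show m + 1 - (2*k+2) = m - (2*k+2) by omega,
        if_neg (by omega : ¬ 2*k+2 ≤ m), if_pos (by omega : 2*k+2 ≤ m+1)]
      simp
      omega
    · have hg : glue k f g m = g (m - (2*k+2)) := by
        unfold glue
        rw [if_neg (by omega), if_neg (by omega), if_neg (by omega)]
      rw [hg, show min (m+1-1) (2*k) = min (m-1) (2*k) by omega,
        dc_of_eq g (show m + 1 - (2*k+2) = (m - (2*k+2)) + 1 by omega),
        if_pos (by omega : 2*k+2 ≤ m), if_pos (by omega : 2*k+2 ≤ m+1)]
      omega

lemma NDyck_glue {k m₂ : ℕ} {f g : ℕ → Bool} (hf : NDyck k f) (hg : NDyck m₂ g) :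
    NDyck (k + m₂ + 1) (glue k f g) := by
  obtain ⟨hf1, hf2⟩ := hf
  obtain ⟨hg1, hg2⟩ := hg
  constructor
  · rw [uc_glue]
    rw [show min (2*(k+m₂+1)-1) (2*k) = 2*k by omega,
      show 2*(k+m₂+1) - (2*k+2) = 2*m₂ by omega, hf1, hg1,
      if_pos (by omega : 1 ≤ 2*(k+m₂+1))]
    omega
  · intro m hm
    rw [uc_glue, dc_glue]
    have e1 : dc f (min (m-1) (2*k)) ≤ uc f (min (m-1) (2*k)) := hf2 _ (by omega)
    have e2 : dc g (m - (2*k+2)) ≤ uc g (m - (2*k+2)) := hg2 _ (by omega)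
    rcases Nat.lt_or_ge m 1 with h0 | h1
    · interval_cases m; simp
    rcases Nat.lt_or_ge m (2*k+2) with h2 | h3
    · rw [if_pos h1, if_neg (by omega), show m - (2*k+2) = 0 by omega]
      simp; omega
    · rw [if_pos h1, if_pos h3]
      omega

lemma glue_strict_below {k : ℕ} {f g : ℕ → Bool} (hf : NDyck k f) (m : ℕ)
    (h1 : 0 < m) (h2 : m < 2*k+2) : dc (glue k f g) m < uc (glue k f g) m := by
  rw [uc_glue, dc_glue, if_pos (by omega : 1 ≤ m), if_neg (by omega : ¬ 2*k+2 ≤ m),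
    show m - (2*k+2) = 0 by omega]
  have := hf.2 (min (m-1) (2*k)) (by omega)
  simp
  omega

lemma glue_ret {k : ℕ} {f g : ℕ → Bool} (hf : NDyck k f) :
    uc (glue k f g) (2*k+2) = dc (glue k f g) (2*k+2) := by
  rw [uc_glue, dc_glue, show (2*k+2) - (2*k+2) = 0 by omega,
    show min (2*k+2-1) (2*k) = 2*k by omega, if_pos (by omega), if_pos (by omega)]
  have h1 := hf.1
  have h2 := uc_add_dc f (2*k)
  simp only [uc_zero, dc_zero]
  omega

def areaSum (f : ℕ → Bool) (n : ℕ) : ℕ :=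
  ∑ m ∈ Finset.range (2*n+1), (uc f m - dc f m)/2

lemma sum_halves (N : ℕ) : ∑ m ∈ Finset.range (2*N+1), m/2 = N*N := by
  induction N with
  | zero => simp
  | succ N ih =>
    rw [show 2*(N+1)+1 = (2*N+1) + 1 + 1 by ring, Finset.sum_range_succ,
      Finset.sum_range_succ, ih, show (2*N+1)/2 = N by omega,
      show (2*N+1+1)/2 = N+1 by omega]
    ring

lemma area_sumdc {n : ℕ} {f : ℕ → Bool} (hf : NDyck n f) :
    areaSum f n + (∑ m ∈ Finset.range (2*n+1), dc f m) = n*n := by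
  rw [areaSum, ← Finset.sum_add_distrib, ← sum_halves n]
  apply Finset.sum_congr rfl
  intro m hm
  rw [Finset.mem_range] at hm
  have h1 := hf.2 m (by omega)
  have h2 := uc_add_dc f m
  omega

lemma sumdc_glue {k m₂ : ℕ} {f g : ℕ → Bool} (hf : NDyck k f) :
    (∑ m ∈ Finset.range (2*(k+m₂+1)+1), dc (glue k f g) m)
      = (∑ m ∈ Finset.range (2*k+1), dc f m)
        + (∑ m ∈ Finset.range (2*m₂+1), dc g m) + (2*m₂+1)*(k+1) := by
  have hdf : dc f (2*k) = k := by
    have := uc_add_dc f (2*k); have := hf.1; omega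
  rw [show 2*(k+m₂+1)+1 = (2*k+2) + (2*m₂+1) by ring, Finset.sum_range_add,
    show 2*k+2 = 1 + (2*k+1) by ring, Finset.sum_range_add]
  have e1 : ∀ i ∈ Finset.range (2*k+1), dc (glue k f g) (1+i) = dc f i := by
    intro i hi
    rw [Finset.mem_range] at hi
    rw [dc_glue, show min (1+i-1) (2*k) = i by omega, if_neg (by omega),
      show 1+i-(2*k+2) = 0 by omega, dc_zero]
    omega
  have e2 : ∀ i ∈ Finset.range (2*m₂+1),
      dc (glue k f g) (1+(2*k+1)+i) = (k+1) + dc g i := by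
    intro i hi
    rw [dc_glue, show min (1+(2*k+1)+i-1) (2*k) = 2*k by omega, if_pos (by omega),
      show 1+(2*k+1)+i-(2*k+2) = i by omega, hdf]
  rw [Finset.sum_congr rfl e1, Finset.sum_congr rfl e2, Finset.sum_add_distrib,
    Finset.sum_const, Finset.card_range, smul_eq_mul]
  simp [dc_zero]
  ring

lemma area_glue {k m₂ : ℕ} {f g : ℕ → Bool} (hf : NDyck k f) (hg : NDyck m₂ g) :
    areaSum (glue k f g) (k+m₂+1) = k + areaSum f k + areaSum g m₂ := by
  have e1 := area_sumdc (NDyck_glue hf hg)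
  have e2 := area_sumdc hf
  have e3 := area_sumdc hg
  have e4 := sumdc_glue (g := g) (m₂ := m₂) hf
  zify at e1 e2 e3 e4 ⊢
  linear_combination e1 - e2 - e3 - e4

def rkN (f : ℕ → Bool) (n : ℕ) : ℕ :=
  ∑ j ∈ Finset.range (n-1), (if f (2*j+1) = true then 1 else 0)

lemma rkN_glue {k m₂ : ℕ} {f g : ℕ → Bool} (hf : NDyck k f) (hg : NDyck m₂ g) :
    rkN (glue k f g) (k+m₂+1) + rkN f k = k + rkN g m₂ := by
  have hsplit : k = (∑ j ∈ Finset.range k, (if f (2*j) = true then 1 else 0))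
      + (∑ j ∈ Finset.range k, (if f (2*j+1) = true then 1 else 0)) := by
    have := uc_even_odd f k
    rw [hf.1, Finset.sum_add_distrib] at this
    exact this
  have hodd : (∑ j ∈ Finset.range k, (if f (2*j+1) = true then 1 else 0))
      = rkN f k := by
    cases k with
    | zero => simp [rkN]
    | succ k' =>
      rw [Finset.sum_range_succ, show 2*k'+1 = 2*(k'+1)-1 by omega,
        last_step (by omega) hf]
      simp [rkN]
  rw [rkN, show k+m₂+1-1 = k + m₂ by omega, Finset.sum_range_add]
  have e1 : ∀ j ∈ Finset.range k,
      (if glue k f g (2*j+1) = true then 1 else 0)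
        = (if f (2*j) = true then 1 else 0) := by
    intro j hj
    rw [Finset.mem_range] at hj
    have : glue k f g (2*j+1) = f (2*j) := by
      unfold glue
      rw [if_neg (by omega), if_pos (by omega), show 2*j+1-1 = 2*j by omega]
    rw [this]
  rw [Finset.sum_congr rfl e1]
  have e2 : (∑ i ∈ Finset.range m₂,
      (if glue k f g (2*(k+i)+1) = true then 1 else 0)) = rkN g m₂ := by
    cases m₂ with
    | zero => simp [rkN]
    | succ m' =>
      rw [show m'+1 = 1 + m' by omega, Finset.sum_range_add]
      have h0 : glue k f g (2*(k+0)+1) = false := by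
        unfold glue; rw [if_neg (by omega), if_neg (by omega), if_pos (by omega)]
      have e3 : ∀ i ∈ Finset.range m',
          (if glue k f g (2*(k+(1+i))+1) = true then 1 else 0)
            = (if g (2*i+1) = true then 1 else 0) := by
        intro i hi
        have : glue k f g (2*(k+(1+i))+1) = g (2*i+1) := by
          unfold glue
          rw [if_neg (by omega), if_neg (by omega), if_neg (by omega),
            show 2*(k+(1+i))+1 - (2*k+2) = 2*i+1 by omega]
        rw [this]
      rw [Finset.sum_congr rfl e3, Finset.sum_range_one, h0]
      simp [rkN]
  rw [e2]
  omega

open scoped Classical in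
noncomputable def kOf (f : ℕ → Bool) : ℕ :=
  if h : ∃ m, 0 < m ∧ uc f m = dc f m then Nat.find h / 2 - 1 else 0

def piece1 (k : ℕ) (f : ℕ → Bool) : ℕ → Bool :=
  fun j => if j < 2*k then f (j+1) else false

def piece2 (k L : ℕ) (f : ℕ → Bool) : ℕ → Bool :=
  fun j => if j < L then f (j + (2*k+2)) else false

lemma ndyck_ex {n : ℕ} {f : ℕ → Bool} (hn : 1 ≤ n) (hf : NDyck n f) :
    ∃ m, 0 < m ∧ uc f m = dc f m := by
  refine ⟨2*n, by omega, ?_⟩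
  have := uc_add_dc f (2*n)
  have := hf.1
  omega

lemma kOf_spec {n : ℕ} {f : ℕ → Bool} (hn : 1 ≤ n) (hf : NDyck n f) :
    kOf f < n ∧ uc f (2*(kOf f)+2) = kOf f + 1 ∧ dc f (2*(kOf f)+2) = kOf f + 1 ∧
      ∀ m, 0 < m → m < 2*(kOf f)+2 → dc f m < uc f m := by
  classical
  have hex := ndyck_ex hn hf
  have hk : kOf f = Nat.find hex / 2 - 1 := by
    rw [kOf, dif_pos hex]
  obtain ⟨hF0, hFeq⟩ := Nat.find_spec hex
  have hFle : Nat.find hex ≤ 2*n := by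
    apply Nat.find_le
    refine ⟨by omega, ?_⟩
    have := uc_add_dc f (2*n)
    have := hf.1
    omega
  have hsum := uc_add_dc f (Nat.find hex)
  have hF2 : Nat.find hex = 2*(kOf f)+2 := by omega
  have hmin : ∀ m, 0 < m → m < 2*(kOf f)+2 → dc f m < uc f m := by
    intro m hm1 hm2
    have h5 := Nat.find_min hex (m := m) (by omega)
    have hle := hf.2 m (by omega)
    simp only [not_and] at h5
    have := h5 hm1
    omega
  refine ⟨by omega, by rw [← hF2]; omega, by rw [← hF2]; omega, hmin⟩

lemma first_up {n : ℕ} {f : ℕ → Bool} (hn : 1 ≤ n) (hf : NDyck n f) :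
    f 0 = true := by
  obtain ⟨_, _, _, hmin⟩ := kOf_spec hn hf
  have h1 := hmin 1 (by omega) (by omega)
  have h2 := uc_succ f 0
  have h3 := dc_succ f 0
  cases h : f 0
  · simp [h] at h2 h3; omega
  · rfl

lemma down_at {n : ℕ} {f : ℕ → Bool} (hn : 1 ≤ n) (hf : NDyck n f) :
    f (2*(kOf f)+1) = false := by
  obtain ⟨_, hu, hd, hmin⟩ := kOf_spec hn hf
  have h1 := hmin (2*(kOf f)+1) (by omega) (by omega)
  have h2 := uc_of_eq f (show 2*(kOf f)+2 = (2*(kOf f)+1)+1 by omega)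
  have h3 := dc_of_eq f (show 2*(kOf f)+2 = (2*(kOf f)+1)+1 by omega)
  have h4 := uc_add_dc f (2*(kOf f)+1)
  cases h : f (2*(kOf f)+1)
  · rfl
  · simp [h] at h2 h3; omega

lemma glue_pieces {n : ℕ} {f : ℕ → Bool} (hn : 1 ≤ n) (hf : NDyck n f)
    (hvan : ∀ j, 2*n ≤ j → f j = false) :
    glue (kOf f) (piece1 (kOf f) f) (piece2 (kOf f) (2*(n-1-kOf f)) f) = f := by
  obtain ⟨hkn, hu, hd, hmin⟩ := kOf_spec hn hf
  set k := kOf f with hk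
  funext j
  unfold glue piece1 piece2
  rcases Nat.eq_or_lt_of_le (Nat.zero_le j) with h0 | h1
  · rw [if_pos (by omega)]
    rw [← h0] at *
    exact (first_up hn hf).symm
  rw [if_neg (by omega)]
  rcases Nat.lt_or_ge j (2*k+1) with h2 | h3
  · rw [if_pos (by omega), if_pos (by omega), show j - 1 + 1 = j by omega]
  rcases Nat.eq_or_lt_of_le h3 with h4 | h5
  · rw [if_neg (by omega), if_pos (by omega), ← h4]
    exact (down_at hn hf).symm
  · rw [if_neg (by omega), if_neg (by omega)]
    rcases Nat.lt_or_ge j (2*n) with h6 | h7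
    · rw [if_pos (by omega), show j - (2*k+2) + (2*k+2) = j by omega]
    · rw [if_neg (by omega)]
      exact (hvan j h7).symm

lemma piece_counts {n : ℕ} {f : ℕ → Bool} (hn : 1 ≤ n) (hf : NDyck n f)
    (hvan : ∀ j, 2*n ≤ j → f j = false) :
    NDyck (kOf f) (piece1 (kOf f) f)
      ∧ NDyck (n-1-kOf f) (piece2 (kOf f) (2*(n-1-kOf f)) f) := by
  obtain ⟨hkn, hu, hd, hmin⟩ := kOf_spec hn hf
  set k := kOf f with hk
  set f₁ := piece1 k f with hf₁
  set g₁ := piece2 k (2*(n-1-k)) f with hg₁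
  have hgl := glue_pieces hn hf hvan
  rw [← hk, ← hf₁, ← hg₁] at hgl
  have hucf : ∀ m, uc f m
      = (if 1 ≤ m then 1 else 0) + uc f₁ (min (m-1) (2*k)) + uc g₁ (m - (2*k+2)) := by
    intro m; rw [← hgl, uc_glue]
  have hdcf : ∀ m, dc f m
      = dc f₁ (min (m-1) (2*k)) + (if 2*k+2 ≤ m then 1 else 0) + dc g₁ (m - (2*k+2)) := by
    intro m; rw [← hgl, dc_glue]
  have huc1 : ∀ j ≤ 2*k, uc f (j+1) = 1 + uc f₁ j := by
    intro j hj
    rw [hucf (j+1), show min (j+1-1) (2*k) = j by omega, show j+1-(2*k+2) = 0 by omega,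
      if_pos (by omega), uc_zero]
    omega
  have hdc1 : ∀ j ≤ 2*k, dc f (j+1) = dc f₁ j := by
    intro j hj
    rw [hdcf (j+1), show min (j+1-1) (2*k) = j by omega, show j+1-(2*k+2) = 0 by omega,
      if_neg (by omega), dc_zero]
    omega
  have huc2 : ∀ j, uc f (2*k+2+j) = 1 + uc f₁ (2*k) + uc g₁ j := by
    intro j
    rw [hucf (2*k+2+j), show min (2*k+2+j-1) (2*k) = 2*k by omega,
      show 2*k+2+j-(2*k+2) = j by omega, if_pos (by omega)]
  have hdc2 : ∀ j, dc f (2*k+2+j) = dc f₁ (2*k) + 1 + dc g₁ j := by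
    intro j
    rw [hdcf (2*k+2+j), show min (2*k+2+j-1) (2*k) = 2*k by omega,
      show 2*k+2+j-(2*k+2) = j by omega, if_pos (by omega)]
  have hd21 : f (2*k+1) = false := down_at hn hf
  have hdf2k : dc f₁ (2*k) = k := by
    have e1 := hdc1 (2*k) (by omega)
    have e2 := dc_of_eq f (show 2*k+2 = (2*k+1)+1 by omega)
    rw [hd21] at e2
    simp at e2
    omega
  have huck : uc f₁ (2*k) = k := by
    have e1 := huc1 (2*k) (by omega)
    have e2 := uc_of_eq f (show 2*k+2 = (2*k+1)+1 by omega)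
    rw [hd21] at e2
    simp at e2
    omega
  constructor
  · refine ⟨huck, ?_⟩
    intro m hm
    rcases Nat.eq_or_lt_of_le (Nat.zero_le m) with h0 | h1
    · rw [← h0]; simp
    rcases Nat.eq_or_lt_of_le hm with h2 | h3
    · rw [h2, huck, hdf2k]
    · have e1 := huc1 m (by omega)
      have e2 := hdc1 m (by omega)
      have e3 := hmin (m+1) (by omega) (by omega)
      omega
  · have hucg : uc g₁ (2*(n-1-k)) = n-1-k := by
      have e1 := huc2 (2*(n-1-k))
      rw [show 2*k+2+2*(n-1-k) = 2*n by omega, hf.1, huck] at e1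
      omega
    refine ⟨hucg, ?_⟩
    intro m hm
    have e1 := huc2 m
    have e2 := hdc2 m
    have e3 := hf.2 (2*k+2+m) (by omega)
    omega

lemma kOf_glue {k m₂ : ℕ} {f g : ℕ → Bool} (hf : NDyck k f) (hg : NDyck m₂ g) :
    kOf (glue k f g) = k := by
  classical
  have hnd := NDyck_glue hf hg
  have hex := ndyck_ex (n := k+m₂+1) (by omega) hnd
  have hfind : Nat.find hex = 2*k+2 := by
    rw [Nat.find_eq_iff]
    refine ⟨⟨by omega, glue_ret (g := g) hf⟩, ?_⟩
    intro m hm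
    simp only [not_and]
    intro hm0
    have := glue_strict_below (g := g) hf m hm0 (by omega)
    omega
  rw [kOf, dif_pos hex, hfind]
  omega

lemma piece1_glue {k : ℕ} {f g : ℕ → Bool} (hvf : ∀ j, 2*k ≤ j → f j = false) :
    piece1 k (glue k f g) = f := by
  funext j
  unfold piece1 glue
  rcases Nat.lt_or_ge j (2*k) with h | h
  · rw [if_pos h, if_neg (by omega), if_pos (by omega), show j+1-1 = j by omega]
  · rw [if_neg (by omega)]
    exact (hvf j h).symm

lemma piece2_glue {k L : ℕ} {f g : ℕ → Bool} (hvg : ∀ j, L ≤ j → g j = false) :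
    piece2 k L (glue k f g) = g := by
  funext j
  unfold piece2 glue
  rcases Nat.lt_or_ge j L with h | h
  · rw [if_pos h, if_neg (by omega), if_neg (by omega), if_neg (by omega),
      show j+(2*k+2)-(2*k+2) = j by omega]
  · rw [if_neg (by omega)]
    exact (hvg j h).symm

lemma stepAt_fin {m : ℕ} (p : Fin m → Bool) (i : Fin m) : stepAt p (i : ℕ) = p i := by
  unfold stepAt; rw [dif_pos i.isLt]

lemma stepAt_ge {m : ℕ} (p : Fin m → Bool) {j : ℕ} (h : m ≤ j) : stepAt p j = false := by
  unfold stepAt; rw [dif_neg (by omega)]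

lemma upCount_eq {m : ℕ} (p : Fin m → Bool) (k : ℕ) :
    upCount p k = uc (stepAt p) k := by
  unfold upCount uc
  rw [Finset.card_filter, Finset.card_filter]
  have e0 : ∀ i : Fin m, (if (i : ℕ) < k ∧ p i = true then 1 else 0)
      = (fun j : ℕ => if j < k ∧ stepAt p j = true then 1 else 0) (i : ℕ) := by
    intro i; simp only [stepAt_fin]
  rw [Finset.sum_congr rfl (fun i _ => e0 i),
    Fin.sum_univ_eq_sum_range (fun j => if j < k ∧ stepAt p j = true then 1 else 0) m]
  rw [Finset.sum_subset (Finset.range_subset_range.2 (le_max_left m k))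
    (fun x _ hx => by
      rw [Finset.mem_range, not_lt] at hx
      simp [stepAt_ge p hx])]
  rw [show (∑ j ∈ Finset.range k, (if stepAt p j = true then 1 else 0))
      = ∑ j ∈ Finset.range k, (if j < k ∧ stepAt p j = true then 1 else 0) from
    Finset.sum_congr rfl (fun j hj => by
      rw [Finset.mem_range] at hj
      simp [hj])]
  rw [Finset.sum_subset (Finset.range_subset_range.2 (le_max_right m k))
    (fun x _ hx => by
      rw [Finset.mem_range, not_lt] at hx
      simp
      omega)]

lemma downCount_eq {m : ℕ} (p : Fin m → Bool) {k : ℕ} (hk : k ≤ m) :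
    downCount p k = dc (stepAt p) k := by
  unfold downCount dc
  rw [Finset.card_filter, Finset.card_filter]
  have e0 : ∀ i : Fin m, (if (i : ℕ) < k ∧ p i = false then 1 else 0)
      = (fun j : ℕ => if j < k ∧ stepAt p j = false then 1 else 0) (i : ℕ) := by
    intro i; simp only [stepAt_fin]
  rw [Finset.sum_congr rfl (fun i _ => e0 i),
    Fin.sum_univ_eq_sum_range (fun j => if j < k ∧ stepAt p j = false then 1 else 0) m]
  rw [show (∑ j ∈ Finset.range k, (if stepAt p j = false then 1 else 0))
      = ∑ j ∈ Finset.range k, (if j < k ∧ stepAt p j = false then 1 else 0) from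
    Finset.sum_congr rfl (fun j hj => by
      rw [Finset.mem_range] at hj
      simp [hj])]
  rw [← Finset.sum_subset (Finset.range_subset_range.2 hk)
    (fun x _ hx => by
      rw [Finset.mem_range, not_lt] at hx
      simp
      omega)]

lemma isDyck_iff {n : ℕ} (p : Fin (2*n) → Bool) : IsDyck n p ↔ NDyck n (stepAt p) := by
  unfold IsDyck NDyck
  constructor
  · rintro ⟨h1, h2⟩
    refine ⟨by rw [← upCount_eq, h1], ?_⟩
    intro m hm
    rw [← upCount_eq, ← downCount_eq p hm]
    exact h2 m (by omega)
  · rintro ⟨h1, h2⟩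
    refine ⟨by rw [upCount_eq, h1], ?_⟩
    intro m hm
    rw [upCount_eq, downCount_eq p (show m ≤ 2*n by omega)]
    exact h2 m (by omega)

lemma area_eq {n : ℕ} (p : Fin (2*n) → Bool) : area p = areaSum (stepAt p) n := by
  unfold area areaSum height
  apply Finset.sum_congr rfl
  intro m hm
  rw [Finset.mem_range] at hm
  rw [upCount_eq, downCount_eq p (show m ≤ 2*n by omega)]

lemma rk_eq {n : ℕ} (p : Fin (2*n) → Bool) : rk p = rkN (stepAt p) n := by
  unfold rk rkN
  rw [Finset.card_filter]
  cases n with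
  | zero => simp
  | succ n' =>
    rw [show Finset.Icc 1 (n'+1-1) = Finset.Ico 1 (n'+1) by
        rw [Finset.Ico_add_one_right_eq_Icc, Nat.succ_sub_one],
      Finset.sum_Ico_eq_sum_range]
    apply Finset.sum_congr rfl
    intro j hj
    rw [show 2*(1+j)-1 = 2*j+1 by omega]

def toFin (m : ℕ) (f : ℕ → Bool) : Fin m → Bool := fun i => f i

lemma stepAt_toFin (m : ℕ) (f : ℕ → Bool) (hvan : ∀ j, m ≤ j → f j = false) :
    stepAt (toFin m f) = f := by
  funext j
  unfold stepAt toFin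
  by_cases h : j < m
  · rw [dif_pos h]
  · rw [dif_neg h]
    exact (hvan j (by omega)).symm

lemma piece1_vanish (k : ℕ) (f : ℕ → Bool) : ∀ j, 2*k ≤ j → piece1 k f j = false := by
  intro j hj; unfold piece1; rw [if_neg (by omega)]

lemma piece2_vanish (k L : ℕ) (f : ℕ → Bool) : ∀ j, L ≤ j → piece2 k L f j = false := by
  intro j hj; unfold piece2; rw [if_neg (by omega)]

lemma glue_vanish {k m₂ : ℕ} (f g : ℕ → Bool) (hvg : ∀ j, 2*m₂ ≤ j → g j = false) :
    ∀ j, 2*(k+m₂+1) ≤ j → glue k f g j = false := by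
  intro j hj
  unfold glue
  rw [if_neg (by omega), if_neg (by omega), if_neg (by omega)]
  exact hvg _ (by omega)

lemma mem_dyck {n : ℕ} (p : Fin (2*n) → Bool) : p ∈ dyckSet n ↔ NDyck n (stepAt p) := by
  rw [dyckSet, Finset.mem_filter, isDyck_iff]
  simp

lemma fiber_sum {n k : ℕ} (hn : 1 ≤ n) (hk : k < n) (q t : ℝ) (ht : t ≠ 0) :
    (∑ p ∈ (dyckSet n).filter (fun p => kOf (stepAt p) = k), q ^ area p * t ^ rk p)
      = ∑ pr ∈ (dyckSet k ×ˢ dyckSet (n-1-k)),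
          (q*t)^k * (q ^ area pr.1 * t⁻¹ ^ rk pr.1) * (q ^ area pr.2 * t ^ rk pr.2) := by
  refine Finset.sum_bij'
    (fun p _ => (toFin (2*k) (piece1 k (stepAt p)),
      toFin (2*(n-1-k)) (piece2 k (2*(n-1-k)) (stepAt p))))
    (fun pr _ => toFin (2*n) (glue k (stepAt pr.1) (stepAt pr.2)))
    ?hi ?hj ?li ?ri ?h
  case hi =>
    intro p hp
    rw [Finset.mem_filter] at hp
    obtain ⟨hp1, hkof⟩ := hp
    have hf := (mem_dyck p).1 hp1
    have hpc := piece_counts hn hf (fun j hj => stepAt_ge p hj)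
    rw [hkof] at hpc
    rw [Finset.mem_product]
    constructor
    · rw [mem_dyck, stepAt_toFin _ _ (piece1_vanish k _)]
      exact hpc.1
    · rw [mem_dyck, stepAt_toFin _ _ (piece2_vanish k _ _)]
      exact hpc.2
  case hj =>
    intro pr hpr
    rw [Finset.mem_product] at hpr
    have hf1 := (mem_dyck pr.1).1 hpr.1
    have hf2 := (mem_dyck pr.2).1 hpr.2
    have hvan' : ∀ j, 2*n ≤ j → glue k (stepAt pr.1) (stepAt pr.2) j = false := by
      intro j hj
      exact glue_vanish (k := k) (m₂ := n-1-k) _ _ (fun j' hj' => stepAt_ge _ hj') j (by omega)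
    have hglueND := NDyck_glue hf1 hf2
    rw [show k + (n-1-k) + 1 = n by omega] at hglueND
    rw [Finset.mem_filter]
    constructor
    · rw [mem_dyck, stepAt_toFin _ _ hvan']
      exact hglueND
    · rw [stepAt_toFin _ _ hvan', kOf_glue hf1 hf2]
  case li =>
    intro p hp
    rw [Finset.mem_filter] at hp
    obtain ⟨hp1, hkof⟩ := hp
    have hf := (mem_dyck p).1 hp1
    have hgl := glue_pieces hn hf (fun j hj => stepAt_ge p hj)
    rw [hkof] at hgl
    funext i
    show glue k (stepAt (toFin (2*k) (piece1 k (stepAt p))))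
      (stepAt (toFin (2*(n-1-k)) (piece2 k (2*(n-1-k)) (stepAt p)))) (i : ℕ) = p i
    rw [stepAt_toFin _ _ (piece1_vanish k _), stepAt_toFin _ _ (piece2_vanish k _ _),
      hgl, stepAt_fin]
  case ri =>
    intro pr hpr
    rw [Finset.mem_product] at hpr
    have hvan' : ∀ j, 2*n ≤ j → glue k (stepAt pr.1) (stepAt pr.2) j = false := by
      intro j hj
      exact glue_vanish (k := k) (m₂ := n-1-k) _ _ (fun j' hj' => stepAt_ge _ hj') j (by omega)
    have hst : stepAt (toFin (2*n) (glue k (stepAt pr.1) (stepAt pr.2)))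
        = glue k (stepAt pr.1) (stepAt pr.2) := stepAt_toFin _ _ hvan'
    have c1 : toFin (2*k) (piece1 k (stepAt (toFin (2*n)
        (glue k (stepAt pr.1) (stepAt pr.2))))) = pr.1 := by
      funext i
      show piece1 k (stepAt (toFin (2*n) (glue k (stepAt pr.1) (stepAt pr.2)))) (i:ℕ) = pr.1 i
      rw [hst, piece1_glue (fun j hj => stepAt_ge _ hj)]
      simp only [stepAt_fin]
    have c2 : toFin (2*(n-1-k)) (piece2 k (2*(n-1-k)) (stepAt (toFin (2*n)
        (glue k (stepAt pr.1) (stepAt pr.2))))) = pr.2 := by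
      funext i
      show piece2 k (2*(n-1-k)) (stepAt (toFin (2*n)
        (glue k (stepAt pr.1) (stepAt pr.2)))) (i:ℕ) = pr.2 i
      rw [hst, piece2_glue (fun j hj => stepAt_ge _ hj)]
      simp only [stepAt_fin]
    exact Prod.ext c1 c2
  case h =>
    intro p hp
    rw [Finset.mem_filter] at hp
    obtain ⟨hp1, hkof⟩ := hp
    have hf := (mem_dyck p).1 hp1
    have hpc := piece_counts hn hf (fun j hj => stepAt_ge p hj)
    rw [hkof] at hpc
    have hgl := glue_pieces hn hf (fun j hj => stepAt_ge p hj)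
    rw [hkof] at hgl
    set P₁ : Fin (2*k) → Bool := toFin (2*k) (piece1 k (stepAt p)) with hP₁
    set P₂ : Fin (2*(n-1-k)) → Bool
      := toFin (2*(n-1-k)) (piece2 k (2*(n-1-k)) (stepAt p)) with hP₂
    show q ^ area p * t ^ rk p
      = (q*t)^k * (q ^ area P₁ * t⁻¹ ^ rk P₁) * (q ^ area P₂ * t ^ rk P₂)
    have hs1 : stepAt P₁ = piece1 k (stepAt p) := stepAt_toFin _ _ (piece1_vanish k _)
    have hs2 : stepAt P₂ = piece2 k (2*(n-1-k)) (stepAt p)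
      := stepAt_toFin _ _ (piece2_vanish k _ _)
    have hA' := area_glue hpc.1 hpc.2
    rw [hgl, show k+(n-1-k)+1 = n by omega] at hA'
    have hR' := rkN_glue hpc.1 hpc.2
    rw [hgl, show k+(n-1-k)+1 = n by omega] at hR'
    have hA : area p = k + area P₁ + area P₂ := by
      rw [area_eq, area_eq, area_eq, hs1, hs2]
      exact hA'
    have hR : rk p + rk P₁ = k + rk P₂ := by
      rw [rk_eq, rk_eq, rk_eq, hs1, hs2]
      exact hR'
    have h2 : t ^ (rk p) * t ^ (rk P₁) = t ^ k * t ^ (rk P₂) := by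
      rw [← pow_add, ← pow_add, hR]
    rw [hA, pow_add, pow_add, mul_pow, inv_pow]
    have hne : t ^ (rk P₁) ≠ 0 := pow_ne_zero _ ht
    field_simp
    linear_combination (q^k * q^(area P₁) * q^(area P₂)) * h2

end RCR

open RCR

/-- Refined Catalan recurrence for the joint area/rank generating polynomial
`D_n(q,t) = ∑_p q^area(p) t^rk(p)`: `D_0(q,t) = 1` and, for `n ≥ 1`,
`D_n(q,t) = ∑_{k=0}^{n-1} (qt)^k D_k(q,1/t) D_{n-1-k}(q,t)`. -/


theorem refined_catalan_recurrence (n : ℕ) (hn : 1 ≤ n) (q t : ℝ) (ht : t ≠ 0) :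
    (∑ p ∈ dyckSet 0, q ^ area p * t ^ rk p) = 1 ∧
    (∑ p ∈ dyckSet n, q ^ area p * t ^ rk p) =
      ∑ k ∈ Finset.range n, (q * t) ^ k *
        (∑ p ∈ dyckSet k, q ^ area p * t⁻¹ ^ rk p) *
        (∑ p ∈ dyckSet (n - 1 - k), q ^ area p * t ^ rk p) := by
  constructor
  · have hall : dyckSet 0 = Finset.univ := by
      unfold dyckSet
      apply Finset.filter_true_of_mem
      intro p _
      constructor
      · simp [upCount]
      · intro k _
        simp [upCount, downCount]
    rw [hall]
    have hterm : ∀ p : Fin (2*0) → Bool, q ^ area p * t ^ rk p = 1 := by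
      intro p
      have ha : area p = 0 := by simp [area, height, upCount, downCount]
      have hr : rk p = 0 := by simp [rk]
      rw [ha, hr]
      simp
    rw [Finset.sum_congr rfl (fun p _ => hterm p), Finset.sum_const]
    simp
  · have hmaps : ∀ p ∈ dyckSet n, kOf (stepAt p) ∈ Finset.range n := by
      intro p hp
      have hf := (mem_dyck p).1 hp
      rw [Finset.mem_range]
      exact (kOf_spec hn hf).1
    rw [← Finset.sum_fiberwise_of_maps_to hmaps (fun p => q ^ area p * t ^ rk p)]
    apply Finset.sum_congr rfl
    intro k hk
    rw [Finset.mem_range] at hk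
    rw [fiber_sum hn hk q t ht, Finset.sum_product]
    rw [mul_assoc, Finset.sum_mul_sum, Finset.mul_sum]
    apply Finset.sum_congr rfl
    intro p₁ _
    rw [Finset.mul_sum]
    apply Finset.sum_congr rfl
    intro p₂ _
    ring
end

section
/- For every Dyck path p of order n, area(p) ≥ rk(p). -/
open Finset

lemma upCount_eq_range {m : ℕ} (p : Fin m → Bool) (k : ℕ) (hk : k ≤ m) :
    upCount p k = ((Finset.range k).filter fun j => stepAt p j = true).card := by
  unfold upCount
  refine Finset.card_bij (fun i _ => (i : ℕ)) ?_ ?_ ?_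
  · intro i hi
    simp only [mem_filter, mem_univ, true_and] at hi
    simp [mem_filter, mem_range, hi.1, stepAt, i.isLt, hi.2]
  · intro a ha b hb hab; exact Fin.ext hab
  · intro j hj
    simp only [mem_filter, mem_range] at hj
    have hjm : j < m := lt_of_lt_of_le hj.1 hk
    refine ⟨⟨j, hjm⟩, ?_, rfl⟩
    simp only [mem_filter, mem_univ, true_and]
    refine ⟨hj.1, ?_⟩
    have := hj.2; simpa [stepAt, hjm] using this

lemma downCount_eq_range {m : ℕ} (p : Fin m → Bool) (k : ℕ) (hk : k ≤ m) :
    downCount p k = ((Finset.range k).filter fun j => stepAt p j = false).card := by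
  unfold downCount
  refine Finset.card_bij (fun i _ => (i : ℕ)) ?_ ?_ ?_
  · intro i hi
    simp only [mem_filter, mem_univ, true_and] at hi
    simp [mem_filter, mem_range, hi.1, stepAt, i.isLt, hi.2]
  · intro a ha b hb hab; exact Fin.ext hab
  · intro j hj
    simp only [mem_filter, mem_range] at hj
    have hjm : j < m := lt_of_lt_of_le hj.1 hk
    refine ⟨⟨j, hjm⟩, ?_, rfl⟩
    simp only [mem_filter, mem_univ, true_and]
    refine ⟨hj.1, ?_⟩
    have := hj.2; simpa [stepAt, hjm] using this

lemma up_add_down {m : ℕ} (p : Fin m → Bool) (k : ℕ) (hk : k ≤ m) :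
    upCount p k + downCount p k = k := by
  rw [upCount_eq_range p k hk, downCount_eq_range p k hk]
  have := Finset.card_filter_add_card_filter_not
    (s := Finset.range k) (p := fun j => stepAt p j = true)
  simpa [Bool.not_eq_true, Finset.card_range] using this

lemma upCount_succ {m : ℕ} (p : Fin m → Bool) (k : ℕ) (hk : k < m) :
    upCount p (k + 1) = upCount p k + if stepAt p k = true then 1 else 0 := by
  rw [upCount_eq_range p (k+1) hk, upCount_eq_range p k hk.le,
    Finset.range_add_one, Finset.filter_insert]
  split <;> simp [Finset.card_insert_of_notMem]

lemma downCount_succ {m : ℕ} (p : Fin m → Bool) (k : ℕ) (hk : k < m) :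
    downCount p (k + 1) = downCount p k + if stepAt p k = false then 1 else 0 := by
  rw [downCount_eq_range p (k+1) hk, downCount_eq_range p k hk.le,
    Finset.range_add_one, Finset.filter_insert]
  split <;> simp [Finset.card_insert_of_notMem]

/-- For every Dyck path `p` of order `n`, `area(p) ≥ rk(p)`. -/
theorem rank_le_area (n : ℕ) (p : Fin (2 * n) → Bool) (hp : IsDyck n p) :
    rk p ≤ area p := by
  obtain ⟨hup, hdyck⟩ := hp
  set S := (Finset.Icc 1 (n - 1)).filter (fun i => stepAt p (2 * i - 1) = true) with hS
  have key : ∀ i ∈ S, 1 ≤ height p (2 * i) / 2 := by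
    intro i hi
    simp only [hS, mem_filter, mem_Icc] at hi
    obtain ⟨⟨h1, h2⟩, hstep⟩ := hi
    have h2i1 : 2 * i - 1 < 2 * n := by omega
    have hD : downCount p (2 * i - 1) ≤ upCount p (2 * i - 1) := hdyck _ (by omega)
    have hsum : upCount p (2 * i - 1) + downCount p (2 * i - 1) = 2 * i - 1 :=
      up_add_down p _ (by omega)
    have e : 2 * i - 1 + 1 = 2 * i := by omega
    have hU : upCount p (2 * i) = upCount p (2 * i - 1) + 1 := by
      have h := upCount_succ p (2 * i - 1) h2i1
      rw [e, hstep] at h; simpa using h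
    have hDn : downCount p (2 * i) = downCount p (2 * i - 1) := by
      have h := downCount_succ p (2 * i - 1) h2i1
      rw [e, hstep] at h; simpa using h
    have hh : 2 ≤ height p (2 * i) := by
      unfold height; omega
    omega
  have hinj : ∀ a ∈ S, ∀ b ∈ S, 2 * a = 2 * b → a = b := by intro a _ b _ h; omega
  have hsub : S.image (fun i => 2 * i) ⊆ Finset.range (2 * n + 1) := by
    intro k hk
    simp only [hS, mem_image, mem_filter, mem_Icc] at hk
    obtain ⟨i, ⟨⟨hi1, hi2⟩, _⟩, rfl⟩ := hk
    simp only [mem_range]; omega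
  calc rk p = ∑ _i ∈ S, 1 := Finset.card_eq_sum_ones _
    _ ≤ ∑ i ∈ S, height p (2 * i) / 2 := Finset.sum_le_sum key
    _ = ∑ k ∈ S.image (fun i => 2 * i), height p k / 2 :=
        (Finset.sum_image (f := fun k => height p k / 2) hinj).symm
    _ ≤ area p := Finset.sum_le_sum_of_subset hsub
end

section
/- For any Motzkin path m of order n, the fiber B(m) = {Dyck paths p of order n : θ(p) = m} under the projection θ satisfies sum over p in B(m) of q^(area(p)) t^(rk(p)) = q^(area(m)) * t^(rk(m)) * (1+qt)^(n-1-2*rk(m)). -/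
open Finset

def upM {k : ℕ} (m : Fin k → Option Bool) (j : ℕ) : ℕ :=
  (Finset.univ.filter fun i : Fin k => (i : ℕ) < j ∧ m i = some true).card

def downM {k : ℕ} (m : Fin k → Option Bool) (j : ℕ) : ℕ :=
  (Finset.univ.filter fun i : Fin k => (i : ℕ) < j ∧ m i = some false).card

/-- A Motzkin word (`some true` = up, `some false` = down, `none` = level):
as many ups as downs, every prefix having at least as many ups as downs.
A Motzkin path of order `n` is such a word of length `n-1`. -/
def IsMotzkin {k : ℕ} (m : Fin k → Option Bool) : Prop :=
  upM m k = downM m k ∧ ∀ j < k + 1, downM m j ≤ upM m j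

instance (k : ℕ) : DecidablePred (IsMotzkin (k := k)) := fun m => by
  unfold IsMotzkin; infer_instance

/-- The Finset of Motzkin paths of order `n` (length `n-1`). -/
def motzSet (n : ℕ) : Finset (Fin (n - 1) → Option Bool) :=
  Finset.univ.filter IsMotzkin

/-- The rank of a Motzkin path: its number of up steps. -/
def rkM {k : ℕ} (m : Fin k → Option Bool) : ℕ := upM m k

def mext {k : ℕ} (m : Fin k → Option Bool) (i : ℕ) : Option Bool :=
  if h : i < k then m ⟨i, h⟩ else none

/-- ρ : Motzkin paths of order `n` → Dyck paths of order `n`.  Prepend an up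
step and append a down step; up steps become two up steps, down steps two down
steps, and each level step becomes a down-up pair. -/
def rho (n : ℕ) (m : Fin (n - 1) → Option Bool) : Fin (2 * n) → Bool := fun j =>
  if (j : ℕ) = 0 then true
  else if (j : ℕ) = 2 * n - 1 then false
  else
    match mext m (((j : ℕ) - 1) / 2) with
    | some b => b
    | none => decide ((j : ℕ) % 2 = 0)

/-- The area of a Motzkin path is the area of the Dyck path `ρ(m)`. -/
def areaM (n : ℕ) (m : Fin (n - 1) → Option Bool) : ℕ := area (rho n m)

/-- θ : Dyck paths of order `n` → Motzkin paths of order `n`, joining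
consecutive odd lattice points of the path: the segment between the `i`-th and
`(i+1)`-st odd points (steps `2i+1`, `2i+2`, 0-indexed) becomes an up, down, or
level step accordingly. -/
def theta (n : ℕ) (p : Fin (2 * n) → Bool) : Fin (n - 1) → Option Bool := fun i =>
  match stepAt p (2 * (i : ℕ) + 1), stepAt p (2 * (i : ℕ) + 2) with
  | true, true => some true
  | false, false => some false
  | _, _ => none

-- Batch 1: generic counting lemmas

lemma stepAt_lt {M : ℕ} (p : Fin M → Bool) {j : ℕ} (h : j < M) :
    stepAt p j = p ⟨j, h⟩ := dif_pos h

lemma mext_lt {K : ℕ} (m : Fin K → Option Bool) {j : ℕ} (h : j < K) :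
    mext m j = m ⟨j, h⟩ := dif_pos h

/-- counts over range -/
def cntB {M : ℕ} (p : Fin M → Bool) (b : Bool) (k : ℕ) : ℕ :=
  ((Finset.range k).filter fun j => stepAt p j = b).card

def cntO {K : ℕ} (m : Fin K → Option Bool) (o : Option Bool) (k : ℕ) : ℕ :=
  ((Finset.range k).filter fun j => mext m j = o).card

lemma cntB_succ {M : ℕ} (p : Fin M → Bool) (b : Bool) (k : ℕ) :
    cntB p b (k+1) = cntB p b k + if stepAt p k = b then 1 else 0 := by
  unfold cntB
  rw [Finset.range_add_one, Finset.filter_insert]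
  split <;> simp [Finset.card_insert_of_notMem]

lemma cntO_succ {K : ℕ} (m : Fin K → Option Bool) (o : Option Bool) (k : ℕ) :
    cntO m o (k+1) = cntO m o k + if mext m k = o then 1 else 0 := by
  unfold cntO
  rw [Finset.range_add_one, Finset.filter_insert]
  split <;> simp [Finset.card_insert_of_notMem]

lemma card_fin_filter {M : ℕ} (P : ℕ → Prop) [DecidablePred P] {k : ℕ} (hk : k ≤ M) :
    (Finset.univ.filter fun i : Fin M => (i : ℕ) < k ∧ P (i : ℕ)).card
      = ((Finset.range k).filter P).card := by
  refine Finset.card_bij (fun i _ => (i : ℕ)) ?_ ?_ ?_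
  · intro a ha
    simp only [Finset.mem_filter, Finset.mem_univ, true_and] at ha
    simp [Finset.mem_filter, Finset.mem_range, ha.1, ha.2]
  · intro a ha b hb hab
    exact Fin.val_injective hab
  · intro b hb
    simp only [Finset.mem_filter, Finset.mem_range] at hb
    exact ⟨⟨b, lt_of_lt_of_le hb.1 hk⟩, by simp [hb.1, hb.2], rfl⟩

lemma upCount_eq {M : ℕ} (p : Fin M → Bool) {k : ℕ} (hk : k ≤ M) :
    upCount p k = cntB p true k := by
  unfold upCount cntB
  rw [← card_fin_filter (fun j => stepAt p j = true) hk]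
  congr 1
  apply Finset.filter_congr
  intro i _
  constructor <;> intro h
  · exact ⟨h.1, by rw [stepAt_lt p i.isLt, Fin.eta]; exact h.2⟩
  · exact ⟨h.1, by rw [stepAt_lt p i.isLt, Fin.eta] at h; exact h.2⟩

lemma downCount_eq {M : ℕ} (p : Fin M → Bool) {k : ℕ} (hk : k ≤ M) :
    downCount p k = cntB p false k := by
  unfold downCount cntB
  rw [← card_fin_filter (fun j => stepAt p j = false) hk]
  congr 1
  apply Finset.filter_congr
  intro i _
  constructor <;> intro h
  · exact ⟨h.1, by rw [stepAt_lt p i.isLt, Fin.eta]; exact h.2⟩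
  · exact ⟨h.1, by rw [stepAt_lt p i.isLt, Fin.eta] at h; exact h.2⟩

lemma upM_eq {K : ℕ} (m : Fin K → Option Bool) {k : ℕ} (hk : k ≤ K) :
    upM m k = cntO m (some true) k := by
  unfold upM cntO
  rw [← card_fin_filter (fun j => mext m j = some true) hk]
  congr 1
  apply Finset.filter_congr
  intro i _
  constructor <;> intro h
  · exact ⟨h.1, by rw [mext_lt m i.isLt, Fin.eta]; exact h.2⟩
  · exact ⟨h.1, by rw [mext_lt m i.isLt, Fin.eta] at h; exact h.2⟩

lemma downM_eq {K : ℕ} (m : Fin K → Option Bool) {k : ℕ} (hk : k ≤ K) :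
    downM m k = cntO m (some false) k := by
  unfold downM cntO
  rw [← card_fin_filter (fun j => mext m j = some false) hk]
  congr 1
  apply Finset.filter_congr
  intro i _
  constructor <;> intro h
  · exact ⟨h.1, by rw [mext_lt m i.isLt, Fin.eta]; exact h.2⟩
  · exact ⟨h.1, by rw [mext_lt m i.isLt, Fin.eta] at h; exact h.2⟩

lemma cntO_partition {K : ℕ} (m : Fin K → Option Bool) (k : ℕ) :
    cntO m (some true) k + cntO m (some false) k + cntO m none k = k := by
  induction k with
  | zero => simp [cntO]
  | succ k ih =>
    rw [cntO_succ, cntO_succ, cntO_succ]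
    rcases h : mext m k with _ | b
    · simp [h]; omega
    · cases b <;> simp [h] <;> omega
-- Batch 2: the fiber paths

def gpath (n : ℕ) (m : Fin (n - 1) → Option Bool) (S : Finset ℕ) : Fin (2 * n) → Bool :=
  fun j =>
    if (j : ℕ) = 0 then true
    else if (j : ℕ) = 2 * n - 1 then false
    else
      match mext m (((j : ℕ) - 1) / 2) with
      | some b => b
      | none =>
          if ((j : ℕ) - 1) / 2 ∈ S then decide ((j : ℕ) % 2 = 1)
          else decide ((j : ℕ) % 2 = 0)

lemma rho_eq_gpath (n : ℕ) (m : Fin (n - 1) → Option Bool) :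
    rho n m = gpath n m ∅ := by
  funext j
  unfold rho gpath
  rcases h : mext m (((j : ℕ) - 1) / 2) with _ | b <;> simp [h]

lemma gpath_zero {n : ℕ} (hn : 1 ≤ n) (m : Fin (n - 1) → Option Bool) (S : Finset ℕ) :
    stepAt (gpath n m S) 0 = true := by
  rw [stepAt_lt _ (by omega : 0 < 2 * n)]
  simp [gpath]

lemma gpath_last {n : ℕ} (hn : 1 ≤ n) (m : Fin (n - 1) → Option Bool) (S : Finset ℕ) :
    stepAt (gpath n m S) (2 * n - 1) = false := by
  rw [stepAt_lt _ (by omega : 2 * n - 1 < 2 * n)]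
  show (if (2 * n - 1 : ℕ) = 0 then true
    else if (2 * n - 1 : ℕ) = 2 * n - 1 then false else _) = false
  rw [if_neg (by omega), if_pos rfl]

lemma gpath_odd {n : ℕ} (m : Fin (n - 1) → Option Bool) (S : Finset ℕ) {i : ℕ}
    (hi : i < n - 1) :
    stepAt (gpath n m S) (2 * i + 1)
      = match mext m i with
        | some b => b
        | none => decide (i ∈ S) := by
  rw [stepAt_lt _ (by omega : 2 * i + 1 < 2 * n)]
  show (if (2 * i + 1 : ℕ) = 0 then true
    else if (2 * i + 1 : ℕ) = 2 * n - 1 then false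
    else match mext m ((2 * i + 1 - 1) / 2) with
      | some b => b
      | none => if (2 * i + 1 - 1) / 2 ∈ S then decide ((2 * i + 1) % 2 = 1)
          else decide ((2 * i + 1) % 2 = 0)) = _
  rw [if_neg (by omega), if_neg (by omega)]
  have h1 : (2 * i + 1 - 1) / 2 = i := by omega
  have h2 : (2 * i + 1) % 2 = 1 := by omega
  rw [h1]
  have h3 : ¬ ((2 * i + 1) % 2 = 0) := by omega
  rcases h : mext m i with _ | b
  · simp only
    by_cases hS : i ∈ S <;> simp [hS, h2, h3]
  · rfl

lemma gpath_even {n : ℕ} (m : Fin (n - 1) → Option Bool) (S : Finset ℕ) {i : ℕ}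
    (hi : i < n - 1) :
    stepAt (gpath n m S) (2 * i + 2)
      = match mext m i with
        | some b => b
        | none => decide (i ∉ S) := by
  rw [stepAt_lt _ (by omega : 2 * i + 2 < 2 * n)]
  show (if (2 * i + 2 : ℕ) = 0 then true
    else if (2 * i + 2 : ℕ) = 2 * n - 1 then false
    else match mext m ((2 * i + 2 - 1) / 2) with
      | some b => b
      | none => if (2 * i + 2 - 1) / 2 ∈ S then decide ((2 * i + 2) % 2 = 1)
          else decide ((2 * i + 2) % 2 = 0)) = _
  rw [if_neg (by omega), if_neg (by omega)]
  have h1 : (2 * i + 2 - 1) / 2 = i := by omega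
  rw [h1]
  have h2 : (2 * i + 2) % 2 = 0 := by omega
  have h3 : ¬ ((2 * i + 2) % 2 = 1) := by omega
  rcases h : mext m i with _ | b
  · simp only
    by_cases hS : i ∈ S <;> simp [hS, h2, h3]
  · rfl

/-- Compatibility of a Dyck path with a Motzkin path on pairs. -/
def Cpt (n : ℕ) (m : Fin (n - 1) → Option Bool) (p : Fin (2 * n) → Bool) : Prop :=
  stepAt p 0 = true ∧ ∀ i < n - 1,
    (mext m i = some true → stepAt p (2 * i + 1) = true ∧ stepAt p (2 * i + 2) = true) ∧
    (mext m i = some false → stepAt p (2 * i + 1) = false ∧ stepAt p (2 * i + 2) = false) ∧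
    (mext m i = none → stepAt p (2 * i + 2) = !stepAt p (2 * i + 1))

lemma gpath_cpt {n : ℕ} (hn : 1 ≤ n) (m : Fin (n - 1) → Option Bool) (S : Finset ℕ) :
    Cpt n m (gpath n m S) := by
  refine ⟨gpath_zero hn m S, fun i hi => ?_⟩
  rcases h : mext m i with _ | b
  · refine ⟨by simp [h], by simp [h], fun _ => ?_⟩
    simp only [gpath_odd m S hi, gpath_even m S hi, h]
    by_cases hS : i ∈ S <;> simp [hS]
  · cases b <;> simp [gpath_odd m S hi, gpath_even m S hi, h]

/-- Counts at odd points for any compatible path. -/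
lemma counts_odd {n : ℕ} {m : Fin (n - 1) → Option Bool} {p : Fin (2 * n) → Bool}
    (hp : Cpt n m p) :
    ∀ i ≤ n - 1,
      cntB p true (2 * i + 1) = 1 + 2 * cntO m (some true) i + cntO m none i ∧
      cntB p false (2 * i + 1) = 2 * cntO m (some false) i + cntO m none i := by
  intro i
  induction i with
  | zero =>
    intro _
    have h0 : ∀ b, cntB p b 1 = if b then 1 else 0 := by
      intro b
      show cntB p b (0 + 1) = _
      rw [cntB_succ]
      cases b <;> simp [cntB, hp.1]
    simp [h0, cntO]
  | succ i ih =>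
    intro hi1
    have hi : i < n - 1 := by omega
    obtain ⟨hU, hD⟩ := ih (by omega)
    have h1 : 2 * (i + 1) + 1 = 2 * i + 1 + 1 + 1 := by ring
    have sU2 := cntB_succ p true (2 * i + 1 + 1)
    have sU1 := cntB_succ p true (2 * i + 1)
    have sD2 := cntB_succ p false (2 * i + 1 + 1)
    have sD1 := cntB_succ p false (2 * i + 1)
    have e2 : (2 : ℕ) * i + 1 + 1 = 2 * i + 2 := by omega
    rw [e2] at sU2 sD2
    rw [h1, e2, sU2, sU1, sD2, sD1, hU, hD, cntO_succ, cntO_succ, cntO_succ]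
    obtain ⟨ht, hf, hl⟩ := hp.2 i hi
    rcases h : mext m i with _ | b
    · have hne := hl h
      rcases hb : stepAt p (2 * i + 1) with _ | _ <;> rw [hb] at hne <;>
        simp [h, hne, hb] <;> omega
    · cases b
      · obtain ⟨h1', h2'⟩ := hf h
        simp [h, h1', h2']; omega
      · obtain ⟨h1', h2'⟩ := ht h
        simp [h, h1', h2']; omega
-- Batch 3: even counts, Dyck property, theta

lemma counts_even {n : ℕ} {m : Fin (n - 1) → Option Bool} {p : Fin (2 * n) → Bool}
    (hp : Cpt n m p) {i : ℕ} (hi : i ≤ n - 1) :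
    cntB p true (2 * i + 2)
      = 1 + 2 * cntO m (some true) i + cntO m none i
        + (if stepAt p (2 * i + 1) = true then 1 else 0) ∧
    cntB p false (2 * i + 2)
      = 2 * cntO m (some false) i + cntO m none i
        + (if stepAt p (2 * i + 1) = true then 0 else 1) := by
  obtain ⟨hU, hD⟩ := counts_odd hp i hi
  have sU := cntB_succ p true (2 * i + 1)
  have sD := cntB_succ p false (2 * i + 1)
  have e2 : (2 : ℕ) * i + 1 + 1 = 2 * i + 2 := by omega
  rw [e2] at sU sD
  rw [sU, sD, hU, hD]
  cases hb : stepAt p (2 * i + 1) <;> simp [hb]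

lemma counts_last {n : ℕ} (hn : 1 ≤ n) {m : Fin (n - 1) → Option Bool}
    {p : Fin (2 * n) → Bool} (hp : Cpt n m p) :
    cntB p true (2 * n)
      = 1 + 2 * cntO m (some true) (n - 1) + cntO m none (n - 1)
        + (if stepAt p (2 * n - 1) = true then 1 else 0) ∧
    cntB p false (2 * n)
      = 2 * cntO m (some false) (n - 1) + cntO m none (n - 1)
        + (if stepAt p (2 * n - 1) = true then 0 else 1) := by
  obtain ⟨hU, hD⟩ := counts_odd hp (n - 1) le_rfl
  have e1 : 2 * (n - 1) + 1 = 2 * n - 1 := by omega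
  rw [e1] at hU hD
  have sU := cntB_succ p true (2 * n - 1)
  have sD := cntB_succ p false (2 * n - 1)
  have e2 : 2 * n - 1 + 1 = 2 * n := by omega
  rw [e2] at sU sD
  rw [sU, sD, hU, hD]
  cases hb : stepAt p (2 * n - 1) <;> simp [hb]

/-- Motzkin facts in range-count form. -/
lemma motz_facts {n : ℕ} {m : Fin (n - 1) → Option Bool} (hm : IsMotzkin m) :
    cntO m (some true) (n - 1) = cntO m (some false) (n - 1) ∧
    ∀ j ≤ n - 1, cntO m (some false) j ≤ cntO m (some true) j := by
  constructor
  · rw [← upM_eq m le_rfl, ← downM_eq m le_rfl]; exact hm.1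
  · intro j hj
    rw [← upM_eq m hj, ← downM_eq m hj]
    exact hm.2 j (by omega)

lemma gpath_isDyck {n : ℕ} (hn : 1 ≤ n) {m : Fin (n - 1) → Option Bool}
    (hm : IsMotzkin m) (S : Finset ℕ) : IsDyck n (gpath n m S) := by
  obtain ⟨hmeq, hmle⟩ := motz_facts hm
  have hcpt := gpath_cpt hn m S
  have hpart := cntO_partition m (n - 1)
  constructor
  · rw [upCount_eq _ le_rfl, (counts_last hn hcpt).1, gpath_last hn m S]
    simp only [Bool.false_eq_true, if_false]
    omega
  · intro k hk
    rw [upCount_eq _ (by omega), downCount_eq _ (by omega)]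
    rcases Nat.eq_zero_or_pos k with h0 | h1
    · subst h0; simp [cntB]
    rcases Nat.even_or_odd k with ⟨i, hi⟩ | ⟨i, hi⟩
    · -- k = 2 * i, 1 ≤ i ≤ n
      by_cases hin : i = n
      · -- k = 2n
        have e : k = 2 * n := by omega
        obtain ⟨eU, eD⟩ := counts_last hn hcpt
        rw [e, eU, eD, gpath_last hn m S]
        simp only [Bool.false_eq_true, if_false]
        omega
      · have hi2 : i - 1 < n - 1 := by omega
        have e : k = 2 * (i - 1) + 2 := by omega
        obtain ⟨eU, eD⟩ := counts_even hcpt (le_of_lt hi2)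
        rw [e, eU, eD]
        have := hmle (i - 1) (by omega)
        split <;> omega
    · -- k = 2 * i + 1, i ≤ n - 1
      obtain ⟨eU, eD⟩ := counts_odd hcpt i (by omega)
      rw [hi, eU, eD]
      have := hmle i (by omega)
      omega

lemma cpt_theta {n : ℕ} {m : Fin (n - 1) → Option Bool} {p : Fin (2 * n) → Bool}
    (hp : Cpt n m p) : theta n p = m := by
  funext i
  obtain ⟨ht, hf, hl⟩ := hp.2 (i : ℕ) i.isLt
  have hmi : mext m (i : ℕ) = m i := by rw [mext_lt m i.isLt, Fin.eta]
  rw [← hmi]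
  rcases h : mext m (i : ℕ) with _ | b
  · have hne := hl h
    unfold theta
    cases hb : stepAt p (2 * (i : ℕ) + 1) <;> rw [hb] at hne <;> rw [hne] <;> rfl
  · cases b
    · obtain ⟨h1, h2⟩ := hf h
      unfold theta
      rw [h1, h2]
    · obtain ⟨h1, h2⟩ := ht h
      unfold theta
      rw [h1, h2]

lemma gpath_mem {n : ℕ} (hn : 1 ≤ n) {m : Fin (n - 1) → Option Bool}
    (hm : IsMotzkin m) (S : Finset ℕ) :
    gpath n m S ∈ (dyckSet n).filter (fun p => theta n p = m) := by
  simp only [Finset.mem_filter, dyckSet, Finset.mem_univ, true_and]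
  exact ⟨gpath_isDyck hn hm S, cpt_theta (gpath_cpt hn m S)⟩
-- Batch 4: converse

lemma stepAt_coe {M : ℕ} (p : Fin M → Bool) (j : Fin M) : stepAt p (j : ℕ) = p j := by
  rw [stepAt_lt p j.isLt, Fin.eta]

/-- level positions of m, as naturals -/
def lvlSet (n : ℕ) (m : Fin (n - 1) → Option Bool) : Finset ℕ :=
  (Finset.range (n - 1)).filter fun i => mext m i = none

/-- the subset of level positions where p goes up first -/
def spSet (n : ℕ) (m : Fin (n - 1) → Option Bool) (p : Fin (2 * n) → Bool) : Finset ℕ :=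
  (Finset.range (n - 1)).filter fun i => mext m i = none ∧ stepAt p (2 * i + 1) = true

lemma mem_lvlSet {n : ℕ} {m : Fin (n - 1) → Option Bool} {i : ℕ} :
    i ∈ lvlSet n m ↔ i < n - 1 ∧ mext m i = none := by
  simp [lvlSet]

lemma mem_spSet {n : ℕ} {m : Fin (n - 1) → Option Bool} {p : Fin (2 * n) → Bool} {i : ℕ} :
    i ∈ spSet n m p ↔ i < n - 1 ∧ mext m i = none ∧ stepAt p (2 * i + 1) = true := by
  simp [spSet, and_assoc]

lemma spSet_subset {n : ℕ} (m : Fin (n - 1) → Option Bool) (p : Fin (2 * n) → Bool) :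
    spSet n m p ⊆ lvlSet n m := fun i hi => by
  rw [mem_spSet] at hi; rw [mem_lvlSet]; exact ⟨hi.1, hi.2.1⟩

lemma fiber_cpt {n : ℕ} (hn : 1 ≤ n) {m : Fin (n - 1) → Option Bool}
    {p : Fin (2 * n) → Bool} (hd : IsDyck n p) (hθ : theta n p = m) : Cpt n m p := by
  constructor
  · -- first step is up
    have h1 := hd.2 1 (by omega)
    rw [upCount_eq _ (by omega), downCount_eq _ (by omega)] at h1
    have hu : cntB p true 1 = cntB p true 0 + if stepAt p 0 = true then 1 else 0 :=
      cntB_succ p true 0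
    have hdn : cntB p false 1 = cntB p false 0 + if stepAt p 0 = false then 1 else 0 :=
      cntB_succ p false 0
    cases hb : stepAt p 0
    · exfalso
      rw [hb] at hu hdn
      have c1 : cntB p true 0 = 0 := by simp [cntB]
      have c2 : cntB p false 0 = 0 := by simp [cntB]
      rw [c1] at hu
      rw [c2] at hdn
      simp at hu hdn
      omega
    · rfl
  · intro i hi
    have h : (match stepAt p (2 * i + 1), stepAt p (2 * i + 2) with
        | true, true => some true
        | false, false => some false
        | _, _ => none) = m ⟨i, hi⟩ := congrFun hθ ⟨i, hi⟩
    have hmi : mext m i = m ⟨i, hi⟩ := mext_lt m hi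
    rw [← hmi] at h
    cases hb1 : stepAt p (2 * i + 1) <;> cases hb2 : stepAt p (2 * i + 2) <;>
      rw [hb1, hb2] at h <;> simp only at h <;>
      refine ⟨fun hc => ?_, fun hc => ?_, fun hc => ?_⟩ <;> simp_all <;>
      rw [← hmi] at h <;> simp at h

lemma fiber_last {n : ℕ} (hn : 1 ≤ n) {m : Fin (n - 1) → Option Bool}
    {p : Fin (2 * n) → Bool} (hm : IsMotzkin m) (hd : IsDyck n p) (hp : Cpt n m p) :
    stepAt p (2 * n - 1) = false := by
  have h1 := hd.1
  rw [upCount_eq _ le_rfl, (counts_last hn hp).1] at h1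
  have hpart := cntO_partition m (n - 1)
  have hmeq := (motz_facts hm).1
  cases hb : stepAt p (2 * n - 1)
  · rfl
  · rw [hb] at h1; simp at h1; omega

lemma fiber_eq_gpath {n : ℕ} (hn : 1 ≤ n) {m : Fin (n - 1) → Option Bool}
    {p : Fin (2 * n) → Bool} (hm : IsMotzkin m) (hd : IsDyck n p) (hθ : theta n p = m) :
    p = gpath n m (spSet n m p) := by
  have hp := fiber_cpt hn hd hθ
  funext j
  rw [← stepAt_coe p j, ← stepAt_coe (gpath n m (spSet n m p)) j]
  have hj := j.isLt
  rcases Nat.eq_zero_or_pos (j : ℕ) with h0 | h1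
  · rw [h0, hp.1, gpath_zero hn m _]
  by_cases hlast : (j : ℕ) = 2 * n - 1
  · rw [hlast, gpath_last hn m _, fiber_last hn hm hd hp]
  rcases Nat.even_or_odd (j : ℕ) with ⟨i, hi⟩ | ⟨i, hi⟩
  · -- even, j = 2*(i-1)+2
    have hi1 : 1 ≤ i := by omega
    have hi2 : i - 1 < n - 1 := by omega
    have e : (j : ℕ) = 2 * (i - 1) + 2 := by omega
    rw [e, gpath_even m _ hi2]
    obtain ⟨ht, hf, hl⟩ := hp.2 (i - 1) hi2
    rcases hmx : mext m (i - 1) with _ | b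
    · have hne := hl hmx
      simp only
      cases hb1 : stepAt p (2 * (i - 1) + 1)
      · have : i - 1 ∉ spSet n m p := by
          rw [mem_spSet]; rintro ⟨-, -, hc⟩; rw [hb1] at hc; exact absurd hc (by simp)
        rw [hb1] at hne; rw [hne]; simp [this]
      · have : i - 1 ∈ spSet n m p := mem_spSet.mpr ⟨hi2, hmx, hb1⟩
        rw [hb1] at hne; rw [hne]; simp [this]
    · cases b
      · rw [(hf hmx).2]
      · rw [(ht hmx).2]
  · -- odd, j = 2*i+1
    have hi2 : i < n - 1 := by omega
    rw [hi, gpath_odd m _ hi2]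
    obtain ⟨ht, hf, hl⟩ := hp.2 i hi2
    rcases hmx : mext m i with _ | b
    · simp only
      cases hb1 : stepAt p (2 * i + 1)
      · have : i ∉ spSet n m p := by
          rw [mem_spSet]; rintro ⟨-, -, hc⟩; rw [hb1] at hc; exact absurd hc (by simp)
        simp [this]
      · have : i ∈ spSet n m p := mem_spSet.mpr ⟨hi2, hmx, hb1⟩
        simp [this]
    · cases b
      · exact (hf hmx).1
      · exact (ht hmx).1

lemma gpath_inj {n : ℕ} (hn : 1 ≤ n) {m : Fin (n - 1) → Option Bool} {S S' : Finset ℕ}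
    (hS : S ⊆ lvlSet n m) (hS' : S' ⊆ lvlSet n m)
    (h : gpath n m S = gpath n m S') : S = S' := by
  ext i
  by_cases hiL : i ∈ lvlSet n m
  · rw [mem_lvlSet] at hiL
    obtain ⟨hi2, hmx⟩ := hiL
    have hstep : stepAt (gpath n m S) (2 * i + 1) = stepAt (gpath n m S') (2 * i + 1) := by
      rw [h]
    rw [gpath_odd m S hi2, gpath_odd m S' hi2, hmx] at hstep
    simp only at hstep
    simpa using hstep
  · constructor <;> intro hc
    · exact absurd (hS hc) hiL
    · exact absurd (hS' hc) hiL

lemma fiber_eq_image {n : ℕ} (hn : 1 ≤ n) {m : Fin (n - 1) → Option Bool}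
    (hm : IsMotzkin m) :
    (dyckSet n).filter (fun p => theta n p = m)
      = ((lvlSet n m).powerset).image (gpath n m) := by
  ext p
  constructor
  · intro hp
    simp only [Finset.mem_filter, dyckSet, Finset.mem_univ, true_and] at hp
    rw [Finset.mem_image]
    exact ⟨spSet n m p, Finset.mem_powerset.mpr (spSet_subset m p),
      (fiber_eq_gpath hn hm hp.1 hp.2).symm⟩
  · intro hp
    rw [Finset.mem_image] at hp
    obtain ⟨S, _, rfl⟩ := hp
    exact gpath_mem hn hm S
-- Batch 5: area and rank

lemma sum_pair (f : ℕ → ℕ) (n : ℕ) :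
    ∑ k ∈ Finset.range (2 * n), f k = ∑ i ∈ Finset.range n, (f (2 * i) + f (2 * i + 1)) := by
  induction n with
  | zero => simp
  | succ n ih =>
    have e : 2 * (n + 1) = (2 * n + 1) + 1 := by ring
    rw [e, Finset.sum_range_succ, Finset.sum_range_succ, ih, Finset.sum_range_succ]
    ring

lemma area_formula {n : ℕ} (hn : 1 ≤ n) {m : Fin (n - 1) → Option Bool}
    (hm : IsMotzkin m) {p : Fin (2 * n) → Bool} (hp : Cpt n m p)
    (hlast : stepAt p (2 * n - 1) = false) :
    area p = ∑ i ∈ Finset.range (n - 1),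
      (2 * (cntO m (some true) i - cntO m (some false) i)
        + if stepAt p (2 * i + 1) = true then 1 else 0) := by
  obtain ⟨hmeq, hmle⟩ := motz_facts hm
  have hh : ∀ k ≤ 2 * n, height p k = cntB p true k - cntB p false k := by
    intro k hk
    unfold height
    rw [upCount_eq _ hk, downCount_eq _ hk]
  unfold area
  rw [Finset.sum_range_succ' (fun k => height p k / 2) (2 * n)]
  have h0 : height p 0 / 2 = 0 := by
    rw [hh 0 (by omega)]; simp [cntB]
  rw [h0, add_zero, sum_pair (fun k => height p (k + 1) / 2) n]
  have hsplit : ∑ i ∈ Finset.range n,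
      (height p (2 * i + 1) / 2 + height p (2 * i + 1 + 1) / 2)
      = ∑ i ∈ Finset.range ((n - 1) + 1),
        (height p (2 * i + 1) / 2 + height p (2 * i + 1 + 1) / 2) := by
    rw [Nat.sub_add_cancel hn]
  rw [hsplit, Finset.sum_range_succ]
  have hlast0 : height p (2 * (n - 1) + 1) / 2 + height p (2 * (n - 1) + 1 + 1) / 2 = 0 := by
    have e1 : 2 * (n - 1) + 1 = 2 * n - 1 := by omega
    have e2 : 2 * (n - 1) + 1 + 1 = 2 * n := by omega
    obtain ⟨oU, oD⟩ := counts_odd hp (n - 1) le_rfl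
    obtain ⟨lU, lD⟩ := counts_last hn hp
    rw [e1] at oU oD
    rw [e2, e1, hh (2 * n - 1) (by omega), hh (2 * n) le_rfl, oU, oD, lU, lD, hlast]
    simp only [Bool.false_eq_true, if_false]
    omega
  rw [hlast0, add_zero]
  apply Finset.sum_congr rfl
  intro i hi
  rw [Finset.mem_range] at hi
  obtain ⟨oU, oD⟩ := counts_odd hp i (by omega)
  obtain ⟨eU, eD⟩ := counts_even hp (le_of_lt hi)
  have e2 : 2 * i + 1 + 1 = 2 * i + 2 := by omega
  rw [e2, hh (2 * i + 1) (by omega), hh (2 * i + 2) (by omega), oU, oD, eU, eD]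
  have hle := hmle i (by omega)
  cases hb : stepAt p (2 * i + 1) <;> (simp at eU eD ⊢; omega)

lemma sum_indicator {S T : Finset ℕ} (hS : S ⊆ T) :
    ∑ i ∈ T, (if i ∈ S then 1 else 0) = S.card := by
  rw [Finset.sum_ite_mem, Finset.inter_eq_right.mpr hS]
  exact (Finset.card_eq_sum_ones S).symm

lemma area_gpath {n : ℕ} (hn : 1 ≤ n) {m : Fin (n - 1) → Option Bool}
    (hm : IsMotzkin m) {S : Finset ℕ} (hS : S ⊆ lvlSet n m) :
    area (gpath n m S) = area (gpath n m ∅) + S.card := by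
  rw [area_formula hn hm (gpath_cpt hn m S) (gpath_last hn m S),
    area_formula hn hm (gpath_cpt hn m ∅) (gpath_last hn m ∅)]
  have key : ∀ i ∈ Finset.range (n - 1),
      (2 * (cntO m (some true) i - cntO m (some false) i)
        + if stepAt (gpath n m S) (2 * i + 1) = true then 1 else 0)
      = (2 * (cntO m (some true) i - cntO m (some false) i)
        + if stepAt (gpath n m ∅) (2 * i + 1) = true then 1 else 0)
        + (if i ∈ S then 1 else 0) := by
    intro i hi
    rw [Finset.mem_range] at hi
    rw [gpath_odd m S hi, gpath_odd m ∅ hi]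
    rcases hmx : mext m i with _ | b
    · by_cases hiS : i ∈ S <;> simp [hmx, hiS]
    · have hiS : i ∉ S := fun h => by
        have h2 := hS h
        rw [mem_lvlSet] at h2
        exact absurd h2.2 (by rw [hmx]; simp)
      simp [hmx, hiS]
  rw [Finset.sum_congr rfl key, Finset.sum_add_distrib,
    sum_indicator (fun i h => Finset.mem_range.mpr (mem_lvlSet.mp (hS h)).1)]

lemma rk_eq {n : ℕ} (p : Fin (2 * n) → Bool) :
    rk p = ((Finset.range (n - 1)).filter fun i => stepAt p (2 * i + 1) = true).card := by
  unfold rk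
  refine Finset.card_bij' (fun a _ => a - 1) (fun b _ => b + 1) ?_ ?_ ?_ ?_
  · intro a ha
    simp only [Finset.mem_filter, Finset.mem_Icc] at ha
    simp only [Finset.mem_filter, Finset.mem_range]
    have e : 2 * (a - 1) + 1 = 2 * a - 1 := by omega
    rw [e]
    exact ⟨by omega, ha.2⟩
  · intro b hb
    simp only [Finset.mem_filter, Finset.mem_range] at hb
    simp only [Finset.mem_filter, Finset.mem_Icc]
    have e : 2 * (b + 1) - 1 = 2 * b + 1 := by omega
    rw [e]
    exact ⟨⟨by omega, by omega⟩, hb.2⟩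
  · intro a ha
    simp only [Finset.mem_filter, Finset.mem_Icc] at ha
    show a - 1 + 1 = a
    omega
  · intro b _
    show b + 1 - 1 = b
    omega

lemma rk_gpath {n : ℕ} {m : Fin (n - 1) → Option Bool} {S : Finset ℕ}
    (hS : S ⊆ lvlSet n m) :
    rk (gpath n m S) = cntO m (some true) (n - 1) + S.card := by
  rw [rk_eq]
  have hset : (Finset.range (n - 1)).filter
      (fun i => stepAt (gpath n m S) (2 * i + 1) = true)
      = ((Finset.range (n - 1)).filter fun i => mext m i = some true) ∪ S := by
    ext i
    simp only [Finset.mem_filter, Finset.mem_range, Finset.mem_union]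
    constructor
    · rintro ⟨hi, hstep⟩
      rw [gpath_odd m S hi] at hstep
      rcases hmx : mext m i with _ | b
      · rw [hmx] at hstep; simp only at hstep
        right; simpa using hstep
      · rw [hmx] at hstep; simp only at hstep
        left; exact ⟨hi, by simp [hmx, hstep]⟩
    · rintro (⟨hi, hmx⟩ | hiS)
      · exact ⟨hi, by rw [gpath_odd m S hi, hmx]⟩
      · have hl := hS hiS
        rw [mem_lvlSet] at hl
        exact ⟨hl.1, by rw [gpath_odd m S hl.1, hl.2]; simp [hiS]⟩
  rw [hset, Finset.card_union_of_disjoint]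
  · rfl
  · rw [Finset.disjoint_left]
    intro a ha haS
    simp only [Finset.mem_filter] at ha
    have := hS haS
    rw [mem_lvlSet] at this
    rw [this.2] at ha
    simp at ha
lemma rkM_eq {n : ℕ} (m : Fin (n - 1) → Option Bool) :
    rkM m = cntO m (some true) (n - 1) := upM_eq m le_rfl

lemma sum_pow_card {L : Finset ℕ} (x : ℝ) :
    ∑ S ∈ L.powerset, x ^ S.card = (1 + x) ^ L.card := by
  have h := Finset.prod_add (fun _ : ℕ => x) (fun _ : ℕ => (1 : ℝ)) L
  simp only [Finset.prod_const, one_pow, mul_one] at h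
  rw [add_comm x 1] at h
  exact h.symm

/-- For a Motzkin path `m` of order `n`, the fiber `B(m)` of the projection `θ`
satisfies `∑_{p ∈ B(m)} q^area(p) t^rk(p)
= q^area(m) t^rk(m) (1+qt)^(n-1-2 rk(m))`. -/
theorem fiber_generating_function (n : ℕ) (hn : 1 ≤ n) (q t : ℝ)
    (m : Fin (n - 1) → Option Bool) (hm : m ∈ motzSet n) :
    (∑ p ∈ (dyckSet n).filter (fun p => theta n p = m),
        q ^ area p * t ^ rk p) =
      q ^ areaM n m * t ^ rkM m * (1 + q * t) ^ (n - 1 - 2 * rkM m) := by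
  have hm' : IsMotzkin m := by simpa [motzSet] using hm
  have hA0 : areaM n m = area (gpath n m ∅) := by rw [areaM, rho_eq_gpath]
  have hcard : (lvlSet n m).card = n - 1 - 2 * rkM m := by
    have h1 : (lvlSet n m).card = cntO m none (n - 1) := rfl
    have hpart := cntO_partition m (n - 1)
    have hrk := rkM_eq m
    have hmeq := (motz_facts hm').1
    omega
  rw [fiber_eq_image hn hm',
    Finset.sum_image (fun S hS S' hS' h =>
      gpath_inj hn (Finset.mem_powerset.mp hS) (Finset.mem_powerset.mp hS') h)]
  have key : ∀ S ∈ (lvlSet n m).powerset,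
      q ^ area (gpath n m S) * t ^ rk (gpath n m S)
        = (q ^ areaM n m * t ^ rkM m) * (q * t) ^ S.card := by
    intro S hS
    have hSL := Finset.mem_powerset.mp hS
    rw [area_gpath hn hm' hSL, rk_gpath hSL, ← hA0, ← rkM_eq m, pow_add, pow_add, mul_pow]
    ring
  rw [Finset.sum_congr rfl key, ← Finset.mul_sum, sum_pow_card, hcard]
end
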